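/- arXiv:2310.04764 — 3 statements merged into one kernel-verified Lean document; each statement's English description precedes it below -/
import Mathlib

section
/- If D is a derived algebra of a multi-sorted algebra A (i.e., D has the same sorts and universes as A, but its operations are interpretations of first-order terms over A's signature), then every subset L of the universe of A that is recognizable in A (via a homomorphism into a locally finite algebra) is also recognizable in D. -/
set_option autoImplicit false

namespace MSAlg

/-- A multi-sorted functional signature over a set of sorts `S`. -/
structure Sig (S : Type) : Type 1 where
  Sym : Type
  args : Sym → List S
  res : Sym → S

/-- A multi-sorted `F`-algebra: a universe for each sort, and an interpretation
of each function symbol as a function of matching sorts. -/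
structure Alg {S : Type} (F : Sig S) : Type 1 where
  carrier : S → Type
  interp : ∀ f : F.Sym,
    ((i : Fin (F.args f).length) → carrier ((F.args f).get i)) → carrier (F.res f)

/-- An algebra is locally finite if each sorted universe is finite. -/
def LocFin {S : Type} {F : Sig S} (A : Alg F) : Prop := ∀ s, Finite (A.carrier s)

/-- Homomorphisms of multi-sorted algebras. -/
structure Hom {S : Type} {F : Sig S} (A B : Alg F) where
  toFun : ∀ s, A.carrier s → B.carrier s
  map : ∀ (f : F.Sym) (as : (i : Fin (F.args f).length) → A.carrier ((F.args f).get i)),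
    toFun _ (A.interp f as) = B.interp f (fun i => toFun _ (as i))

/-- The (disjoint) union of all the sorted universes of an algebra. -/
def Univ {S : Type} {F : Sig S} (A : Alg F) : Type := Σ s, A.carrier s

/-- `L` is recognizable in `A` iff it is the inverse image, under a homomorphism
into a locally finite algebra `B`, of a subset `C` of the universe of `B`. -/
def Recog {S : Type} {F : Sig S} (A : Alg F) (L : Set (Univ A)) : Prop :=
  ∃ B : Alg F, LocFin B ∧ ∃ (h : Hom A B) (C : Set (Univ B)),
    L = {a | (⟨a.1, h.toFun a.1 a.2⟩ : Univ B) ∈ C}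

/-- First-order terms over a signature `F` with sorted variables from `V`. -/
inductive Term {S : Type} (F : Sig S) (V : Type) (sortOf : V → S) : S → Type
  | var (v : V) : Term F V sortOf (sortOf v)
  | app (f : F.Sym)
      (ts : (i : Fin (F.args f).length) → Term F V sortOf ((F.args f).get i)) :
      Term F V sortOf (F.res f)

/-- Evaluation of a term in an algebra, under an assignment of the variables. -/
def Term.eval {S : Type} {F : Sig S} {V : Type} {sortOf : V → S} (A : Alg F)
    (ρ : ∀ v : V, A.carrier (sortOf v)) : ∀ {s : S}, Term F V sortOf s → A.carrier s
  | _, .var v => ρ v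
  | _, .app f ts => A.interp f (fun i => Term.eval A ρ (ts i))

/-- A derived signature: symbols are first-order terms over `F`. -/
structure DerSig {S : Type} (F : Sig S) : Type 1 where
  Sym : Type
  args : Sym → List S
  res : Sym → S
  term : ∀ d : Sym, Term F (Fin (args d).length) (fun i => (args d).get i) (res d)

def DerSig.toSig {S : Type} {F : Sig S} (D : DerSig F) : Sig S :=
  ⟨D.Sym, D.args, D.res⟩

/-- The derived algebra of `A` given by a derived signature `D`: same sorts and
universes, operations are the interpretations in `A` of the terms of `D`. -/
def derivedAlg {S : Type} {F : Sig S} (A : Alg F) (D : DerSig F) : Alg D.toSig where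
  carrier := A.carrier
  interp f as := (D.term f).eval A as

/-- Subalgebras: restrict the sorts, the signature and the universes. -/
structure SubAlg {S : Type} {F : Sig S} (A : Alg F) : Type 1 where
  sorts : Set S
  syms : Set F.Sym
  argsMem : ∀ f ∈ syms, ∀ s ∈ F.args f, s ∈ sorts
  resMem : ∀ f ∈ syms, F.res f ∈ sorts
  carrier : ∀ s : S, Set (A.carrier s)
  empty_outside : ∀ s ∉ sorts, carrier s = ∅
  closed : ∀ (f : F.Sym), f ∈ syms →
    ∀ as : (i : Fin (F.args f).length) → A.carrier ((F.args f).get i),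
    (∀ i, as i ∈ carrier _) → A.interp f as ∈ carrier _

def SubAlg.sig {S : Type} {F : Sig S} {A : Alg F} (B : SubAlg A) : Sig S :=
  ⟨{f : F.Sym // f ∈ B.syms}, fun f => F.args f.1, fun f => F.res f.1⟩

def SubAlg.alg {S : Type} {F : Sig S} {A : Alg F} (B : SubAlg A) : Alg B.sig where
  carrier s := {a : A.carrier s // a ∈ B.carrier s}
  interp f as :=
    ⟨A.interp f.1 (fun i => (as i).1), B.closed f.1 f.2 _ (fun i => (as i).2)⟩

/-- Congruences of a multi-sorted algebra. -/
structure Cong {S : Type} {F : Sig S} (A : Alg F) : Type 1 where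
  rel : ∀ s, A.carrier s → A.carrier s → Prop
  iseqv : ∀ s, Equivalence (rel s)
  compat : ∀ (f : F.Sym)
    (as bs : (i : Fin (F.args f).length) → A.carrier ((F.args f).get i)),
    (∀ i, rel _ (as i) (bs i)) → rel _ (A.interp f as) (A.interp f bs)

/-- A sorted relation saturates `L` if `L` is a union of its classes. -/
def Saturates {S : Type} {F : Sig S} {A : Alg F}
    (r : ∀ s, A.carrier s → A.carrier s → Prop) (L : Set (Univ A)) : Prop :=
  ∀ s a b, r s a b → ((⟨s, a⟩ : Univ A) ∈ L ↔ (⟨s, b⟩ : Univ A) ∈ L)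

/-- A sorted relation is locally finite if it has finitely many classes of each sort. -/
def LocFinRel {S : Type} {F : Sig S} {A : Alg F}
    (r : ∀ s, A.carrier s → A.carrier s → Prop) : Prop :=
  ∀ s, Finite (Quot (r s))

/-- `L` is recognizable iff some locally finite congruence saturates it. -/
def RecogC {S : Type} {F : Sig S} (A : Alg F) (L : Set (Univ A)) : Prop :=
  ∃ C : Cong A, Saturates C.rel L ∧ LocFinRel C.rel

/-- Extension of an assignment `c` of the variables `some v` by the value `a`
for the distinguished variable `none` (of sort `s`). -/
def extAsgn {S : Type} {F : Sig S} (A : Alg F) {V : Type} {sortOf : Option V → S} {s : S}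
    (hx : sortOf none = s) (a : A.carrier s) (c : ∀ v : V, A.carrier (sortOf (some v))) :
    ∀ v : Option V, A.carrier (sortOf v)
  | none => cast (congrArg A.carrier hx.symm) a
  | some v => c v

/-- The syntactic congruence of `L` in `A`: `a` and `b` (of the same sort) are
related iff for every first-order term `t(x, y₁, …)` and every assignment `c`
of the parameter variables, `t(a, c̄) ∈ L ⟺ t(b, c̄) ∈ L`. -/
def SynCong {S : Type} {F : Sig S} (A : Alg F) (L : Set (Univ A)) (s : S)
    (a b : A.carrier s) : Prop :=
  ∀ (V : Type) (sortOf : Option V → S) (hx : sortOf none = s) (s' : S)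
    (t : Term F (Option V) sortOf s') (c : ∀ v : V, A.carrier (sortOf (some v))),
    ((⟨s', t.eval A (extAsgn A hx a c)⟩ : Univ A) ∈ L ↔
     (⟨s', t.eval A (extAsgn A hx b c)⟩ : Univ A) ∈ L)


/-- If `D` is a derived algebra of a multi-sorted algebra `A`, then
every subset `L` of the universe of `A` that is recognizable in `A` is also
recognizable in `D`. -/
theorem hom_eval {S : Type} {F : Sig S} {A B : Alg F} (h : Hom A B)
    {V : Type} {sortOf : V → S} (ρ : ∀ v : V, A.carrier (sortOf v)) :
    ∀ {s : S} (t : Term F V sortOf s),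
      h.toFun s (t.eval A ρ) = t.eval B (fun v => h.toFun _ (ρ v))
  | _, .var v => rfl
  | _, .app f ts => by
      simp only [Term.eval, h.map]
      congr 1
      funext i
      exact hom_eval h ρ (ts i)

theorem recognizable_in_derived_algebra {S : Type} {F : Sig S} (A : Alg F) (D : DerSig F)
    (L : Set (Univ A)) (h : Recog A L) : Recog (derivedAlg A D) L := by
  obtain ⟨B, hBfin, hom, C, hL⟩ := h
  refine ⟨derivedAlg B D, hBfin, ⟨hom.toFun, ?_⟩, C, hL⟩
  intro f as
  exact hom_eval hom as (D.term f)

end MSAlg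
end

section
/- For every finite sort τ of source labels, every graph that is the value of a ground term over the τ-restricted hyperedge-replacement signature has tree-width at most |τ| − 1. -/
set_option autoImplicit false

namespace GraphCF

noncomputable section

/-! ### Concrete graphs

A concrete graph over an alphabet `Lab` of edge labels (with arities `ar`):
vertices `Fin n`, edges `Fin m`, each edge carrying a label and the sequence of
attached vertices, and an assignment of the source labels in the sort `srt`
(a finite set of natural numbers) to vertices.  Graphs in the paper are
isomorphism classes of concrete graphs; we work with concrete graphs together
with the isomorphism relation `GIso`. -/
structure CG (Lab : Type) (ar : Lab → ℕ) : Type where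
  n : ℕ
  m : ℕ
  edg : Fin m → (a : Lab) × (Fin (ar a) → Fin n)
  srt : Finset ℕ
  src : {s : ℕ // s ∈ srt} → Fin n

variable {Lab : Type} {ar : Lab → ℕ}

instance quotFinite {α : Type} [Finite α] (r : α → α → Prop) : Finite (Quot r) :=
  Finite.of_surjective (Quot.mk r) fun q => Quot.exists_rep q

/-- The graph `0_τ` consisting only of sources, one for each label in `τ`. -/
def czero (τ : Finset ℕ) : CG Lab ar where
  n := τ.card
  m := 0
  edg e := Fin.elim0 e
  srt := τ
  src s := τ.equivFin ⟨s.1, s.2⟩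

/-- The single-edge graph `a_(s₁,…,s_k)`. -/
def cedge (a : Lab) (s : Fin (ar a) → ℕ) : CG Lab ar where
  n := (Finset.image s Finset.univ).card
  m := 1
  edg _ := ⟨a, fun i => (Finset.image s Finset.univ).equivFin
    ⟨s i, Finset.mem_image_of_mem s (Finset.mem_univ i)⟩⟩
  srt := Finset.image s Finset.univ
  src t := (Finset.image s Finset.univ).equivFin ⟨t.1, t.2⟩

/-- Restriction of sources: keep only the source labels in `τ`. -/
def crestrict (τ : Finset ℕ) (G : CG Lab ar) : CG Lab ar where
  n := G.n
  m := G.m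
  edg := G.edg
  srt := G.srt ∩ τ
  src s := G.src ⟨s.1, (Finset.mem_inter.mp s.2).1⟩

/-- Renaming of sources along a permutation `α`; the new sort is `α⁻¹(srt)`. -/
def crename (α : Equiv.Perm ℕ) (G : CG Lab ar) : CG Lab ar where
  n := G.n
  m := G.m
  edg := G.edg
  srt := G.srt.image (α.symm : ℕ → ℕ)
  src s := G.src ⟨α s.1, by
    obtain ⟨y, hy, he⟩ := Finset.mem_image.mp s.2
    rw [← he, Equiv.apply_symm_apply]
    exact hy⟩

/-- The fusion relation used to define parallel composition: sources of the two
graphs carrying the same label are identified. -/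
def fuseRel (G₁ G₂ : CG Lab ar) :
    (Fin G₁.n ⊕ Fin G₂.n) → (Fin G₁.n ⊕ Fin G₂.n) → Prop :=
  fun x y => ∃ (s : ℕ) (h₁ : s ∈ G₁.srt) (h₂ : s ∈ G₂.srt),
    x = Sum.inl (G₁.src ⟨s, h₁⟩) ∧ y = Sum.inr (G₂.src ⟨s, h₂⟩)

/-- Parallel composition `G₁ ∥ G₂`: disjoint union with fusion of equally
labeled sources; the sort is the union of the sorts. -/
def ccomp (G₁ G₂ : CG Lab ar) : CG Lab ar :=
  let e := Finite.equivFin (Quot (fuseRel G₁ G₂))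
  { n := Nat.card (Quot (fuseRel G₁ G₂))
    m := G₁.m + G₂.m
    edg := fun i =>
      match finSumFinEquiv.symm i with
      | Sum.inl e₁ => ⟨(G₁.edg e₁).1, fun j => e (Quot.mk _ (Sum.inl ((G₁.edg e₁).2 j)))⟩
      | Sum.inr e₂ => ⟨(G₂.edg e₂).1, fun j => e (Quot.mk _ (Sum.inr ((G₂.edg e₂).2 j)))⟩
    srt := G₁.srt ∪ G₂.srt
    src := fun s =>
      if h : s.1 ∈ G₁.srt then e (Quot.mk _ (Sum.inl (G₁.src ⟨s.1, h⟩)))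
      else e (Quot.mk _ (Sum.inr (G₂.src ⟨s.1, (Finset.mem_union.mp s.2).resolve_left h⟩))) }

theorem crestrict_srt (τ : Finset ℕ) (G : CG Lab ar) :
    (crestrict τ G).srt = G.srt ∩ τ := rfl

theorem crename_srt (α : Equiv.Perm ℕ) (G : CG Lab ar) :
    (crename α G).srt = G.srt.image (α.symm : ℕ → ℕ) := rfl

theorem ccomp_srt (G₁ G₂ : CG Lab ar) : (ccomp G₁ G₂).srt = G₁.srt ∪ G₂.srt := rfl

/-- Isomorphism of concrete graphs. -/
def GIso (G₁ G₂ : CG Lab ar) : Prop :=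
  G₁.srt = G₂.srt ∧
  ∃ (ev : Fin G₁.n ≃ Fin G₂.n) (ee : Fin G₁.m ≃ Fin G₂.m),
    (∀ e, (G₂.edg (ee e)).1 = (G₁.edg e).1 ∧
      HEq (G₂.edg (ee e)).2 (fun i => ev ((G₁.edg e).2 i))) ∧
    (∀ (s : ℕ) (h₁ : s ∈ G₁.srt) (h₂ : s ∈ G₂.srt),
      ev (G₁.src ⟨s, h₁⟩) = G₂.src ⟨s, h₂⟩)

def IsoClosed (L : Set (CG Lab ar)) : Prop :=
  ∀ G₁ G₂ : CG Lab ar, GIso G₁ G₂ → G₁ ∈ L → G₂ ∈ L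

def isoClosure (L : Set (CG Lab ar)) : Set (CG Lab ar) :=
  {G | ∃ G' ∈ L, GIso G' G}

/-- `α` is a `τ`-permutation: it fixes every label outside `τ`. -/
def IsTauPerm (τ : Finset ℕ) (α : Equiv.Perm ℕ) : Prop := ∀ x, x ∉ τ → α x = x

/-- Finite permutations of the source labels. -/
def IsFinPerm (α : Equiv.Perm ℕ) : Prop := ∃ τ : Finset ℕ, IsTauPerm τ α

theorem crename_srt_subset {τ : Finset ℕ} {α : Equiv.Perm ℕ} (hα : IsTauPerm τ α)
    {G : CG Lab ar} (h : G.srt ⊆ τ) : (crename α G).srt ⊆ τ := by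
  intro x hx
  obtain ⟨y, hy, he⟩ := Finset.mem_image.mp hx
  subst he
  by_contra hc
  have h1 := hα _ hc
  rw [Equiv.apply_symm_apply] at h1
  exact hc (h1 ▸ h hy)

/-! ### Ground HR terms -/

/-- Ground terms over the HR signature. -/
inductive HRT (Lab : Type) (ar : Lab → ℕ) : Type
  | zero (τ : Finset ℕ)
  | edge (a : Lab) (s : Fin (ar a) → ℕ)
  | restrict (τ : Finset ℕ) (t : HRT Lab ar)
  | rename (α : Equiv.Perm ℕ) (hα : IsFinPerm α) (t : HRT Lab ar)
  | comp (t₁ t₂ : HRT Lab ar)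

/-- The value of a ground HR term in the graph algebra. -/
def HRT.val : HRT Lab ar → CG Lab ar
  | .zero τ => czero τ
  | .edge a s => cedge a s
  | .restrict τ t => crestrict τ t.val
  | .rename α _ t => crename α t.val
  | .comp t₁ t₂ => ccomp t₁.val t₂.val

/-- The term uses only source labels from `τ`. -/
def HRT.usesOnly (τ : Finset ℕ) : HRT Lab ar → Prop
  | .zero τ' => τ' ⊆ τ
  | .edge _ s => ∀ i, s i ∈ τ
  | .restrict τ' t => τ' ⊆ τ ∧ t.usesOnly τ
  | .rename α _ t => IsTauPerm τ α ∧ t.usesOnly τ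
  | .comp t₁ t₂ => t₁.usesOnly τ ∧ t₂.usesOnly τ

/-- The set of graphs generated by ground terms over the `τ`-restricted
HR signature (up to isomorphism). -/
def genGraphs (Lab : Type) (ar : Lab → ℕ) (τ : Finset ℕ) : Set (CG Lab ar) :=
  {G | ∃ t : HRT Lab ar, t.usesOnly τ ∧ GIso t.val G}

/-! ### HR grammars -/

/-- HR terms with nonterminal (set) variables from `N`. -/
inductive HRTV (Lab : Type) (ar : Lab → ℕ) (N : Type) : Type
  | var (X : N)
  | zero (τ : Finset ℕ)
  | edge (a : Lab) (s : Fin (ar a) → ℕ)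
  | restrict (τ : Finset ℕ) (t : HRTV Lab ar N)
  | rename (α : Equiv.Perm ℕ) (hα : IsFinPerm α) (t : HRTV Lab ar N)
  | comp (t₁ t₂ : HRTV Lab ar N)

/-- Evaluation of a term with set variables, with regard to an assignment `S`
of sets of graphs to the nonterminals. -/
def HRTV.evalSet {N : Type} (S : N → Set (CG Lab ar)) : HRTV Lab ar N → Set (CG Lab ar)
  | .var X => S X
  | .zero τ => {czero τ}
  | .edge a s => {cedge a s}
  | .restrict τ t => crestrict τ '' t.evalSet S
  | .rename α _ t => crename α '' t.evalSet S
  | .comp t₁ t₂ => {G | ∃ G₁ ∈ t₁.evalSet S, ∃ G₂ ∈ t₂.evalSet S, G = ccomp G₁ G₂}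

def HRTV.usesOnly {N : Type} (τ : Finset ℕ) : HRTV Lab ar N → Prop
  | .var _ => True
  | .zero τ' => τ' ⊆ τ
  | .edge _ s => ∀ i, s i ∈ τ
  | .restrict τ' t => τ' ⊆ τ ∧ t.usesOnly τ
  | .rename α _ t => IsTauPerm τ α ∧ t.usesOnly τ
  | .comp t₁ t₂ => t₁.usesOnly τ ∧ t₂.usesOnly τ

/-- A grammar: a finite list of rules `X → t`. -/
abbrev Grammar (Lab : Type) (ar : Lab → ℕ) (N : Type) : Type := List (N × HRTV Lab ar N)

def IsSolution {N : Type} (Γ : Grammar Lab ar N) (S : N → Set (CG Lab ar)) : Prop :=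
  ∀ r ∈ Γ, HRTV.evalSet S r.2 ⊆ S r.1

/-- The component of the least solution of `Γ` at the nonterminal `X`
(the least solution is the pointwise intersection of all solutions). -/
def langOf {N : Type} (Γ : Grammar Lab ar N) (X : N) : Set (CG Lab ar) :=
  {G | ∀ S : N → Set (CG Lab ar), IsSolution Γ S → G ∈ S X}

/-- `L` is context-free for a grammar over the `τ`-restricted HR signature. -/
def ContextFreeT (Lab : Type) (ar : Lab → ℕ) (τ : Finset ℕ) (L : Set (CG Lab ar)) : Prop :=
  ∃ (N : Type) (_ : Finite N) (Γ : Grammar Lab ar N) (X : N),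
    (∀ r ∈ Γ, HRTV.usesOnly τ r.2) ∧ L = isoClosure (langOf Γ X)

/-- `L` is context-free: a component of the least solution of a grammar of
recursive equations over HR operations. -/
def ContextFree (Lab : Type) (ar : Lab → ℕ) (L : Set (CG Lab ar)) : Prop :=
  ∃ (N : Type) (_ : Finite N) (Γ : Grammar Lab ar N) (X : N),
    L = isoClosure (langOf Γ X)

/-! ### Contexts and the syntactic congruence of the HR algebra -/

/-- First-order HR contexts: terms built from a variable (`hole`), arbitrary
graph parameters (`const`) and the HR operations. -/
inductive HRCtx (Lab : Type) (ar : Lab → ℕ) : Type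
  | hole
  | const (G : CG Lab ar)
  | zero (τ : Finset ℕ)
  | edge (a : Lab) (s : Fin (ar a) → ℕ)
  | restrict (τ : Finset ℕ) (c : HRCtx Lab ar)
  | rename (α : Equiv.Perm ℕ) (hα : IsFinPerm α) (c : HRCtx Lab ar)
  | comp (c₁ c₂ : HRCtx Lab ar)

def HRCtx.apply : HRCtx Lab ar → CG Lab ar → CG Lab ar
  | .hole, G => G
  | .const H, _ => H
  | .zero τ, _ => czero τ
  | .edge a s, _ => cedge a s
  | .restrict τ c, G => crestrict τ (c.apply G)
  | .rename α _ c, G => crename α (c.apply G)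
  | .comp c₁ c₂, G => ccomp (c₁.apply G) (c₂.apply G)

/-- The syntactic congruence of `L` in the HR graph algebra. -/
def SynCongHR (L : Set (CG Lab ar)) (G₁ G₂ : CG Lab ar) : Prop :=
  G₁.srt = G₂.srt ∧ ∀ c : HRCtx Lab ar, (c.apply G₁ ∈ L ↔ c.apply G₂ ∈ L)

/-- The context uses only source labels from `τ` (and parameters of sort `⊆ τ`). -/
def HRCtx.usesOnly (τ : Finset ℕ) : HRCtx Lab ar → Prop
  | .hole => True
  | .const G => G.srt ⊆ τ
  | .zero τ' => τ' ⊆ τ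
  | .edge _ s => ∀ i, s i ∈ τ
  | .restrict τ' c => τ' ⊆ τ ∧ c.usesOnly τ
  | .rename α _ c => IsTauPerm τ α ∧ c.usesOnly τ
  | .comp c₁ c₂ => c₁.usesOnly τ ∧ c₂.usesOnly τ

/-- The syntactic congruence of `L` in the finitely-sorted subalgebra `G^τ`. -/
def SynCongHRT (τ : Finset ℕ) (L : Set (CG Lab ar)) (G₁ G₂ : CG Lab ar) : Prop :=
  G₁.srt = G₂.srt ∧
  ∀ c : HRCtx Lab ar, c.usesOnly τ → (c.apply G₁ ∈ L ↔ c.apply G₂ ∈ L)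

/-! ### Congruence-based recognizability in the HR algebra -/

/-- A congruence of the HR graph algebra (on concrete graphs; it must contain
graph isomorphism, respect sorts and be compatible with all HR operations). -/
structure HRCongruence (Lab : Type) (ar : Lab → ℕ) : Type 1 where
  rel : CG Lab ar → CG Lab ar → Prop
  iseqv : Equivalence rel
  iso_le : ∀ G₁ G₂, GIso G₁ G₂ → rel G₁ G₂
  srt_eq : ∀ G₁ G₂, rel G₁ G₂ → G₁.srt = G₂.srt
  restrict_compat : ∀ (τ : Finset ℕ) G₁ G₂, rel G₁ G₂ →
    rel (crestrict τ G₁) (crestrict τ G₂)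
  rename_compat : ∀ (α : Equiv.Perm ℕ), IsFinPerm α → ∀ G₁ G₂, rel G₁ G₂ →
    rel (crename α G₁) (crename α G₂)
  comp_compat : ∀ G₁ G₂ H₁ H₂, rel G₁ H₁ → rel G₂ H₂ →
    rel (ccomp G₁ G₂) (ccomp H₁ H₂)

/-- Locally finite: finitely many classes of each sort. -/
def HRCongruence.LocFin (C : HRCongruence Lab ar) : Prop :=
  ∀ τ : Finset ℕ,
    Finite (Quot (fun a b : {G : CG Lab ar // G.srt = τ} => C.rel a.1 b.1))

def HRCongruence.Saturates (C : HRCongruence Lab ar) (L : Set (CG Lab ar)) : Prop :=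
  ∀ G₁ G₂, C.rel G₁ G₂ → (G₁ ∈ L ↔ G₂ ∈ L)

/-- `L` is recognizable in the HR graph algebra: saturated by a locally finite
congruence. -/
def RecogHR (L : Set (CG Lab ar)) : Prop :=
  ∃ C : HRCongruence Lab ar, C.Saturates L ∧ C.LocFin

/-- graphs of sort included in `τ` -/
abbrev CGT (Lab : Type) (ar : Lab → ℕ) (τ : Finset ℕ) : Type :=
  {G : CG Lab ar // G.srt ⊆ τ}

def subRestrict {τ : Finset ℕ} (τ' : Finset ℕ) (G : CGT Lab ar τ) : CGT Lab ar τ :=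
  ⟨crestrict τ' G.1, by rw [crestrict_srt]; exact Finset.Subset.trans Finset.inter_subset_left G.2⟩

def subRename {τ : Finset ℕ} (α : Equiv.Perm ℕ) (hα : IsTauPerm τ α)
    (G : CGT Lab ar τ) : CGT Lab ar τ :=
  ⟨crename α G.1, crename_srt_subset hα G.2⟩

def subComp {τ : Finset ℕ} (G₁ G₂ : CGT Lab ar τ) : CGT Lab ar τ :=
  ⟨ccomp G₁.1 G₂.1, by rw [ccomp_srt]; exact Finset.union_subset G₁.2 G₂.2⟩

/-- A congruence of the finitely-sorted subalgebra `G^τ`. -/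
structure HRCongruenceT (Lab : Type) (ar : Lab → ℕ) (τ : Finset ℕ) : Type 1 where
  rel : CGT Lab ar τ → CGT Lab ar τ → Prop
  iseqv : Equivalence rel
  iso_le : ∀ G₁ G₂ : CGT Lab ar τ, GIso G₁.1 G₂.1 → rel G₁ G₂
  srt_eq : ∀ G₁ G₂ : CGT Lab ar τ, rel G₁ G₂ → G₁.1.srt = G₂.1.srt
  restrict_compat : ∀ (τ' : Finset ℕ), τ' ⊆ τ → ∀ G₁ G₂, rel G₁ G₂ →
    rel (subRestrict τ' G₁) (subRestrict τ' G₂)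
  rename_compat : ∀ (α : Equiv.Perm ℕ) (hα : IsTauPerm τ α), ∀ G₁ G₂, rel G₁ G₂ →
    rel (subRename α hα G₁) (subRename α hα G₂)
  comp_compat : ∀ G₁ G₂ H₁ H₂, rel G₁ H₁ → rel G₂ H₂ →
    rel (subComp G₁ G₂) (subComp H₁ H₂)

/-- `L` is recognizable in the finitely-sorted subalgebra `G^τ`: saturated by a
congruence of `G^τ` with finitely many classes. -/
def RecogHRT (τ : Finset ℕ) (L : Set (CG Lab ar)) : Prop :=
  ∃ C : HRCongruenceT Lab ar τ,
    (∀ G₁ G₂ : CGT Lab ar τ, C.rel G₁ G₂ → (G₁.1 ∈ L ↔ G₂.1 ∈ L)) ∧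
    Finite (Quot C.rel)

/-! ### Tree decompositions and tree-width -/

/-- A tree decomposition of a concrete graph `G`. -/
structure TreeDecomp (G : CG Lab ar) : Type 1 where
  ι : Type
  finι : Finite ι
  T : SimpleGraph ι
  isTree : T.IsTree
  root : ι
  bag : ι → Finset (Fin G.n)
  edges_covered : ∀ e : Fin G.m, ∃ x : ι, ∀ i, (G.edg e).2 i ∈ bag x
  vert_connected : ∀ v : Fin G.n, (T.induce {x : ι | v ∈ bag x}).Connected
  root_bag : ∀ s : {s : ℕ // s ∈ G.srt}, G.src s ∈ bag root

/-- `G` has tree-width at most `k`: it has a tree decomposition all of whose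
bags have at most `k+1` elements. -/
def TWle (G : CG Lab ar) (k : ℕ) : Prop :=
  ∃ td : TreeDecomp G, ∀ x, (td.bag x).card ≤ k + 1

/-! ### Trees -/

/-- Terms denoting trees over an alphabet `B1` of unary and `B2` of binary
edge labels: constants for unary labels, the `append` operations for binary
labels, and root-fusing composition. -/
inductive TTerm (B1 B2 : Type) : Type
  | leaf (c : B1)
  | append (b : B2) (t : TTerm B1 B2)
  | comp (t₁ t₂ : TTerm B1 B2)

/-- Arity function for tree edge labels. -/
def tAr {B1 B2 : Type} : B1 ⊕ B2 → ℕ := Sum.elim (fun _ => 1) (fun _ => 2)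

/-- The tree (as a graph with root source `0`) denoted by a tree term. -/
def treeEval {B1 B2 : Type} : TTerm B1 B2 → CG (B1 ⊕ B2) tAr
  | .leaf c => cedge (Sum.inl c) (fun _ => 0)
  | .append b t => crename (Equiv.swap 0 1)
      (crestrict {1} (ccomp (cedge (Sum.inr b) ![1, 0]) (treeEval t)))
  | .comp t₁ t₂ => ccomp (treeEval t₁) (treeEval t₂)

/-- Two tree terms denote the same tree. -/
def SameTree {B1 B2 : Type} (t u : TTerm B1 B2) : Prop :=
  GIso (treeEval t) (treeEval u)

/-- The height of (the tree denoted by) a tree term. -/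
def TTerm.height {B1 B2 : Type} : TTerm B1 B2 → ℕ
  | .leaf _ => 0
  | .append _ t => t.height + 1
  | .comp t₁ t₂ => max t₁.height t₂.height

/-- Iterated composition `x ∥ l₁ ∥ … ∥ l_n`. -/
def compList {B1 B2 : Type} (x : TTerm B1 B2) (l : List (TTerm B1 B2)) : TTerm B1 B2 :=
  l.foldl TTerm.comp x

/-- Equality of tree terms up to commutativity and associativity of `∥`. -/
inductive ACeq {B1 B2 : Type} : TTerm B1 B2 → TTerm B1 B2 → Prop
  | refl (t) : ACeq t t
  | symm {t u} : ACeq t u → ACeq u t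
  | trans {t u v} : ACeq t u → ACeq u v → ACeq t v
  | comm (t u) : ACeq (.comp t u) (.comp u t)
  | assoc (t u v) : ACeq (.comp (.comp t u) v) (.comp t (.comp u v))
  | congr_append (b) {t u} : ACeq t u → ACeq (.append b t) (.append b u)
  | congr_comp {t u t' u'} : ACeq t t' → ACeq u u' → ACeq (.comp t u) (.comp t' u')

/-! ### Parse trees -/

/-- Unary parse-tree edge labels: the HR constants. -/
inductive PUn (Lab : Type) (ar : Lab → ℕ) : Type
  | zero (τ : Finset ℕ)
  | edge (a : Lab) (s : Fin (ar a) → ℕ)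

/-- Binary parse-tree edge labels: restriction and renaming. -/
inductive PBin : Type
  | restrict (τ : Finset ℕ)
  | rename (α : Equiv.Perm ℕ) (hα : IsFinPerm α)

/-- Parse trees (as tree terms over the parse alphabet). -/
abbrev PTerm (Lab : Type) (ar : Lab → ℕ) : Type := TTerm (PUn Lab ar) PBin

/-- The canonical evaluation of a parse tree: interpret the edge labels as HR
operations in the graph algebra. -/
def pval : PTerm Lab ar → CG Lab ar
  | .leaf (.zero τ) => czero τ
  | .leaf (.edge a s) => cedge a s
  | .append (.restrict τ) t => crestrict τ (pval t)
  | .append (.rename α _) t => crename α (pval t)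
  | .comp t₁ t₂ => ccomp (pval t₁) (pval t₂)

/-- The unary parse label uses only sources from `τ`. -/
def PUnOK (τ : Finset ℕ) : PUn Lab ar → Prop
  | .zero τ' => τ' ⊆ τ
  | .edge _ s => ∀ i, s i ∈ τ

/-- The binary parse label uses only sources from `τ`. -/
def PBinOK (τ : Finset ℕ) : PBin → Prop
  | .restrict τ' => τ' ⊆ τ
  | .rename α _ => IsTauPerm τ α

/-- The `τ`-restricted parse alphabet (unary part). -/
abbrev PUnT (Lab : Type) (ar : Lab → ℕ) (τ : Finset ℕ) : Type := {u : PUn Lab ar // PUnOK τ u}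
/-- The `τ`-restricted parse alphabet (binary part). -/
abbrev PBinT (τ : Finset ℕ) : Type := {b : PBin // PBinOK τ b}
/-- Parse trees over the `τ`-restricted parse alphabet. -/
abbrev PTermT (Lab : Type) (ar : Lab → ℕ) (τ : Finset ℕ) : Type :=
  TTerm (PUnT Lab ar τ) (PBinT τ)

/-- Relabeling of tree terms. -/
def TTerm.mapL {B1 B2 B1' B2' : Type} (f : B1 → B1') (g : B2 → B2') :
    TTerm B1 B2 → TTerm B1' B2'
  | .leaf c => .leaf (f c)
  | .append b t => .append (g b) (t.mapL f g)
  | .comp t₁ t₂ => .comp (t₁.mapL f g) (t₂.mapL f g)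

/-- Inclusion of `τ`-restricted parse trees into all parse trees. -/
def ptInj {τ : Finset ℕ} (t : PTermT Lab ar τ) : PTerm Lab ar :=
  t.mapL Subtype.val Subtype.val

/-! ### Recognizability for sets of (parse) trees -/

/-- A congruence of the tree algebra `T(B_parse)` (over the universe of parse
trees): contains `SameTree` and is compatible with all tree operations. -/
structure TCong (B1 B2 : Type) : Type 1 where
  rel : TTerm B1 B2 → TTerm B1 B2 → Prop
  iseqv : Equivalence rel
  same_le : ∀ t u, SameTree t u → rel t u
  append_compat : ∀ (b : B2) t u, rel t u → rel (.append b t) (.append b u)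
  comp_compat : ∀ t₁ t₂ u₁ u₂, rel t₁ u₁ → rel t₂ u₂ →
    rel (.comp t₁ t₂) (.comp u₁ u₂)

/-- `K` is recognizable in the tree algebra. -/
def RecogTree {B1 B2 : Type} (K : Set (TTerm B1 B2)) : Prop :=
  ∃ C : TCong B1 B2, (∀ t u, C.rel t u → (t ∈ K ↔ u ∈ K)) ∧ Finite (Quot C.rel)

/-- A congruence of the algebra of parse trees `P` (the HR signature
interpreted over trees): contains `SameTree` and is compatible with the
HR operations on trees. -/
structure PCong (Lab : Type) (ar : Lab → ℕ) : Type 1 where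
  rel : PTerm Lab ar → PTerm Lab ar → Prop
  iseqv : Equivalence rel
  same_le : ∀ t u, SameTree t u → rel t u
  restrict_compat : ∀ (τ : Finset ℕ) t u, rel t u →
    rel (.append (PBin.restrict τ) t) (.append (PBin.restrict τ) u)
  rename_compat : ∀ (α : Equiv.Perm ℕ) (hα : IsFinPerm α) t u, rel t u →
    rel (.append (PBin.rename α hα) t) (.append (PBin.rename α hα) u)
  comp_compat : ∀ t₁ t₂ u₁ u₂, rel t₁ u₁ → rel t₂ u₂ →
    rel (.comp t₁ t₂) (.comp u₁ u₂)

/-- `K` is recognizable in the algebra of parse trees. -/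
def RecogP (K : Set (PTerm Lab ar)) : Prop :=
  ∃ C : PCong Lab ar, (∀ t u, C.rel t u → (t ∈ K ↔ u ∈ K)) ∧ Finite (Quot C.rel)

/-! ### Auxiliary machinery for the tree-width bound -/

section TreeWidthProof

open SimpleGraph

theorem reach_of_rel_map {V W : Type} {G : SimpleGraph V} {H : SimpleGraph W} (φ : V → W)
    (h : ∀ a b, G.Adj a b → φ a = φ b ∨ H.Adj (φ a) (φ b)) {a b : V}
    (hr : G.Reachable a b) : H.Reachable (φ a) (φ b) := by
  obtain ⟨p⟩ := hr
  induction p with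
  | nil => exact Reachable.refl _
  | cons hadj _ ih =>
    rcases h _ _ hadj with he | ha
    · exact he ▸ ih
    · exact ha.reachable.trans ih

theorem connected_of_subsingleton {α : Type} [Subsingleton α] [Nonempty α]
    (G : SimpleGraph α) : G.Connected :=
  Connected.mk fun a b => Subsingleton.elim a b ▸ Reachable.refl _

def glueRel {V W : Type} (G : SimpleGraph V) (H : SimpleGraph W) (v₀ : V) (w₀ : W) :
    Option (V ⊕ W) → Option (V ⊕ W) → Prop
  | some (Sum.inl a), some (Sum.inl b) => G.Adj a b
  | some (Sum.inr a), some (Sum.inr b) => H.Adj a b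
  | none, some (Sum.inl b) => b = v₀
  | none, some (Sum.inr b) => b = w₀
  | _, _ => False

def glue {V W : Type} (G : SimpleGraph V) (H : SimpleGraph W) (v₀ : V) (w₀ : W) :
    SimpleGraph (Option (V ⊕ W)) where
  Adj x y := glueRel G H v₀ w₀ x y ∨ glueRel G H v₀ w₀ y x
  symm := ⟨fun _ _ h => h.symm⟩
  loopless := ⟨by
    rintro (_ | a | a) h <;> rcases h with h | h <;> simp [glueRel] at h⟩

theorem glue_adj {V W : Type} {G : SimpleGraph V} {H : SimpleGraph W} {v₀ : V} {w₀ : W}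
    {x y : Option (V ⊕ W)} :
    (glue G H v₀ w₀).Adj x y ↔ glueRel G H v₀ w₀ x y ∨ glueRel G H v₀ w₀ y x := Iff.rfl

variable {V W : Type} {G : SimpleGraph V} {H : SimpleGraph W} {v₀ : V} {w₀ : W}

@[simp] theorem glue_adj_inl {a b : V} :
    (glue G H v₀ w₀).Adj (some (Sum.inl a)) (some (Sum.inl b)) ↔ G.Adj a b := by
  rw [glue_adj]
  constructor
  · rintro (h | h); · exact h
    · exact (show G.Adj b a from h).symm
  · exact Or.inl

@[simp] theorem glue_adj_inr {a b : W} :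
    (glue G H v₀ w₀).Adj (some (Sum.inr a)) (some (Sum.inr b)) ↔ H.Adj a b := by
  rw [glue_adj]
  constructor
  · rintro (h | h); · exact h
    · exact (show H.Adj b a from h).symm
  · exact Or.inl

@[simp] theorem glue_adj_none_inl {b : V} :
    (glue G H v₀ w₀).Adj none (some (Sum.inl b)) ↔ b = v₀ := by
  rw [glue_adj]
  constructor
  · rintro (h | h); · exact h
    · exact absurd h (by simp [glueRel])
  · exact Or.inl

@[simp] theorem glue_adj_none_inr {b : W} :
    (glue G H v₀ w₀).Adj none (some (Sum.inr b)) ↔ b = w₀ := by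
  rw [glue_adj]
  constructor
  · rintro (h | h); · exact h
    · exact absurd h (by simp [glueRel])
  · exact Or.inl

@[simp] theorem glue_not_adj_cross {a : V} {b : W} :
    ¬ (glue G H v₀ w₀).Adj (some (Sum.inl a)) (some (Sum.inr b)) := by
  rw [glue_adj]
  rintro (h | h) <;> simp [glueRel] at h

@[simp] theorem glue_not_adj_none : ¬ (glue G H v₀ w₀).Adj none none := by
  rw [glue_adj]
  rintro (h | h) <;> simp [glueRel] at h

theorem glue_aux_inl (hG : G.IsAcyclic) {a b : V} (hab : G.Adj a b) :
    ¬ ((glue G H v₀ w₀) \ fromEdgeSet {s(some (Sum.inl a), some (Sum.inl b))}).Reachable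
      (some (Sum.inl a)) (some (Sum.inl b)) := by
  intro hreach
  have hbr := isAcyclic_iff_forall_adj_isBridge.mp hG hab
  rw [isBridge_iff] at hbr
  apply hbr
  have := reach_of_rel_map
    (G := (glue G H v₀ w₀) \ fromEdgeSet {s(some (Sum.inl a), some (Sum.inl b))})
    (H := G \ fromEdgeSet {s(a, b)})
    (fun z => match z with | some (Sum.inl c) => c | _ => v₀) ?_ hreach
  · exact this
  · rintro (_ | c | c) (_ | d | d) ⟨hadj, hdel⟩
    · exact absurd hadj glue_not_adj_none
    · exact Or.inl (glue_adj_none_inl.mp hadj).symm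
    · left; rfl
    · exact Or.inl (glue_adj_none_inl.mp hadj.symm)
    · right
      have hcd : G.Adj c d := glue_adj_inl.mp hadj
      rw [sdiff_adj]
      refine ⟨hcd, ?_⟩
      rw [fromEdgeSet_adj]
      rintro ⟨hmem, -⟩
      apply hdel
      rw [fromEdgeSet_adj]
      refine ⟨?_, fun h => hcd.ne (by simpa using h)⟩
      simp only [Set.mem_singleton_iff] at hmem ⊢
      rw [Sym2.eq_iff] at hmem ⊢
      rcases hmem with ⟨h1, h2⟩ | ⟨h1, h2⟩
      · exact Or.inl ⟨by rw [h1], by rw [h2]⟩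
      · exact Or.inr ⟨by rw [h1], by rw [h2]⟩
    · exact absurd hadj glue_not_adj_cross
    · left; rfl
    · exact absurd hadj.symm glue_not_adj_cross
    · left; rfl

theorem glue_aux_inr (hH : H.IsAcyclic) {a b : W} (hab : H.Adj a b) :
    ¬ ((glue G H v₀ w₀) \ fromEdgeSet {s(some (Sum.inr a), some (Sum.inr b))}).Reachable
      (some (Sum.inr a)) (some (Sum.inr b)) := by
  intro hreach
  have hbr := isAcyclic_iff_forall_adj_isBridge.mp hH hab
  rw [isBridge_iff] at hbr
  apply hbr
  have := reach_of_rel_map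
    (G := (glue G H v₀ w₀) \ fromEdgeSet {s(some (Sum.inr a), some (Sum.inr b))})
    (H := H \ fromEdgeSet {s(a, b)})
    (fun z => match z with | some (Sum.inr c) => c | _ => w₀) ?_ hreach
  · exact this
  · rintro (_ | c | c) (_ | d | d) ⟨hadj, hdel⟩
    · exact absurd hadj glue_not_adj_none
    · left; rfl
    · exact Or.inl (glue_adj_none_inr.mp hadj).symm
    · left; rfl
    · left; rfl
    · exact absurd hadj glue_not_adj_cross
    · exact Or.inl (glue_adj_none_inr.mp hadj.symm)
    · exact absurd hadj.symm glue_not_adj_cross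
    · right
      have hcd : H.Adj c d := glue_adj_inr.mp hadj
      rw [sdiff_adj]
      refine ⟨hcd, ?_⟩
      rw [fromEdgeSet_adj]
      rintro ⟨hmem, -⟩
      apply hdel
      rw [fromEdgeSet_adj]
      refine ⟨?_, fun h => hcd.ne (by simpa using h)⟩
      simp only [Set.mem_singleton_iff] at hmem ⊢
      rw [Sym2.eq_iff] at hmem ⊢
      rcases hmem with ⟨h1, h2⟩ | ⟨h1, h2⟩
      · exact Or.inl ⟨by rw [h1], by rw [h2]⟩
      · exact Or.inr ⟨by rw [h1], by rw [h2]⟩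

theorem glue_aux_none_inl :
    ¬ ((glue G H v₀ w₀) \ fromEdgeSet {s(none, some (Sum.inl v₀))}).Reachable
      none (some (Sum.inl v₀)) := by
  intro hreach
  have := reach_of_rel_map
    (G := (glue G H v₀ w₀) \ fromEdgeSet {s(none, some (Sum.inl v₀))})
    (H := (⊥ : SimpleGraph Bool))
    (fun z => match z with | some (Sum.inl _) => true | _ => false) ?_ hreach
  · rw [reachable_bot] at this
    exact Bool.noConfusion this
  · rintro (_ | c | c) (_ | d | d) ⟨hadj, hdel⟩
    · exact absurd hadj glue_not_adj_none
    · exfalso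
      have hd : d = v₀ := glue_adj_none_inl.mp hadj
      subst hd
      exact hdel (by rw [fromEdgeSet_adj]; exact ⟨Set.mem_singleton _, by simp⟩)
    · left; rfl
    · exfalso
      have hd : c = v₀ := glue_adj_none_inl.mp hadj.symm
      subst hd
      apply hdel
      rw [fromEdgeSet_adj]
      exact ⟨by rw [Sym2.eq_swap]; exact Set.mem_singleton _, by simp⟩
    · left; rfl
    · exact absurd hadj glue_not_adj_cross
    · left; rfl
    · exact absurd hadj.symm glue_not_adj_cross
    · left; rfl

theorem glue_aux_none_inr :
    ¬ ((glue G H v₀ w₀) \ fromEdgeSet {s(none, some (Sum.inr w₀))}).Reachable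
      none (some (Sum.inr w₀)) := by
  intro hreach
  have := reach_of_rel_map
    (G := (glue G H v₀ w₀) \ fromEdgeSet {s(none, some (Sum.inr w₀))})
    (H := (⊥ : SimpleGraph Bool))
    (fun z => match z with | some (Sum.inr _) => true | _ => false) ?_ hreach
  · rw [reachable_bot] at this
    exact Bool.noConfusion this
  · rintro (_ | c | c) (_ | d | d) ⟨hadj, hdel⟩
    · exact absurd hadj glue_not_adj_none
    · left; rfl
    · exfalso
      have hd : d = w₀ := glue_adj_none_inr.mp hadj
      subst hd
      exact hdel (by rw [fromEdgeSet_adj]; exact ⟨Set.mem_singleton _, by simp⟩)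
    · left; rfl
    · left; rfl
    · exact absurd hadj glue_not_adj_cross
    · exfalso
      have hd : c = w₀ := glue_adj_none_inr.mp hadj.symm
      subst hd
      apply hdel
      rw [fromEdgeSet_adj]
      exact ⟨by rw [Sym2.eq_swap]; exact Set.mem_singleton _, by simp⟩
    · exact absurd hadj.symm glue_not_adj_cross
    · left; rfl

theorem glue_reach_none (hG : G.Connected) (hH : H.Connected) (x : Option (V ⊕ W)) :
    (glue G H v₀ w₀).Reachable x none := by
  match x with
  | none => exact Reachable.refl _
  | some (Sum.inl a) =>
    have h1 : (glue G H v₀ w₀).Reachable (some (Sum.inl a)) (some (Sum.inl v₀)) :=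
      reach_of_rel_map (fun z => some (Sum.inl z))
        (fun a b hab => Or.inr (glue_adj_inl.mpr hab)) (hG.preconnected a v₀)
    exact h1.trans (((glue_adj_none_inl (b := v₀)).mpr rfl).symm).reachable
  | some (Sum.inr a) =>
    have h1 : (glue G H v₀ w₀).Reachable (some (Sum.inr a)) (some (Sum.inr w₀)) :=
      reach_of_rel_map (fun z => some (Sum.inr z))
        (fun a b hab => Or.inr (glue_adj_inr.mpr hab)) (hH.preconnected a w₀)
    exact h1.trans (((glue_adj_none_inr (b := w₀)).mpr rfl).symm).reachable

theorem glue_isTree (hG : G.IsTree) (hH : H.IsTree) : (glue G H v₀ w₀).IsTree := by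
  constructor
  · haveI : Nonempty (Option (V ⊕ W)) := ⟨none⟩
    exact Connected.mk fun x y =>
      (glue_reach_none hG.isConnected hH.isConnected x).trans
        (glue_reach_none hG.isConnected hH.isConnected y).symm
  · rw [isAcyclic_iff_forall_adj_isBridge]
    rintro (_ | c | c) (_ | d | d) hadj
    · exact absurd hadj glue_not_adj_none
    · have hd := glue_adj_none_inl.mp hadj; subst hd
      exact isBridge_iff.mpr glue_aux_none_inl
    · have hd := glue_adj_none_inr.mp hadj; subst hd
      exact isBridge_iff.mpr glue_aux_none_inr
    · have hd := glue_adj_none_inl.mp hadj.symm; subst hd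
      refine isBridge_iff.mpr fun hr => ?_
      rw [Sym2.eq_swap] at hr
      exact glue_aux_none_inl hr.symm
    · exact isBridge_iff.mpr (glue_aux_inl hG.IsAcyclic (glue_adj_inl.mp hadj))
    · exact absurd hadj glue_not_adj_cross
    · have hd := glue_adj_none_inr.mp hadj.symm; subst hd
      refine isBridge_iff.mpr fun hr => ?_
      rw [Sym2.eq_swap] at hr
      exact glue_aux_none_inr hr.symm
    · exact absurd hadj.symm glue_not_adj_cross
    · exact isBridge_iff.mpr (glue_aux_inr hH.IsAcyclic (glue_adj_inr.mp hadj))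

end TreeWidthProof

section TreeWidthProof2

open SimpleGraph

/-- The trivial one-node tree decomposition whose single bag contains all vertices. -/
def tdTrivial (G : CG Lab ar) : TreeDecomp G where
  ι := Unit
  finι := inferInstance
  T := ⊥
  isTree := by
    constructor
    · exact connected_of_subsingleton _
    · exact isAcyclic_bot
  root := ()
  bag _ := Finset.univ
  edges_covered _ := ⟨(), fun _ => Finset.mem_univ _⟩
  vert_connected v := by
    haveI : Nonempty {x : Unit | v ∈ (Finset.univ : Finset (Fin G.n))} :=
      ⟨⟨(), by simp⟩⟩
    exact connected_of_subsingleton _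
  root_bag _ := Finset.mem_univ _

/-- A tree decomposition is preserved by source restriction. -/
def tdRestrict (τ' : Finset ℕ) (G : CG Lab ar) (td : TreeDecomp G) :
    TreeDecomp (crestrict τ' G) where
  ι := td.ι
  finι := td.finι
  T := td.T
  isTree := td.isTree
  root := td.root
  bag := td.bag
  edges_covered := td.edges_covered
  vert_connected := td.vert_connected
  root_bag s := td.root_bag ⟨s.1, (Finset.mem_inter.mp s.2).1⟩

/-- A tree decomposition is preserved by source renaming. -/
def tdRename (α : Equiv.Perm ℕ) (G : CG Lab ar) (td : TreeDecomp G) :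
    TreeDecomp (crename α G) where
  ι := td.ι
  finι := td.finι
  T := td.T
  isTree := td.isTree
  root := td.root
  bag := td.bag
  edges_covered := td.edges_covered
  vert_connected := td.vert_connected
  root_bag s := td.root_bag ⟨α s.1, by
    obtain ⟨y, hy, he⟩ := Finset.mem_image.mp s.2
    rw [← he, Equiv.apply_symm_apply]
    exact hy⟩

/-- Tree decompositions (with a bag-size bound) transfer along isomorphisms. -/
theorem td_of_iso {G G' : CG Lab ar} (h : GIso G G') {k : ℕ}
    (H : ∃ td : TreeDecomp G, ∀ x, (td.bag x).card ≤ k) :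
    ∃ td' : TreeDecomp G', ∀ x, (td'.bag x).card ≤ k := by
  obtain ⟨td, hb⟩ := H
  obtain ⟨hsrt, ev, ee, hedg, hsrc⟩ := h
  refine ⟨{
    ι := td.ι
    finι := td.finι
    T := td.T
    isTree := td.isTree
    root := td.root
    bag := fun x => (td.bag x).image ev
    edges_covered := ?_
    vert_connected := ?_
    root_bag := ?_ }, fun x => le_trans (Finset.card_image_le) (hb x)⟩
  · intro e'
    obtain ⟨x, hx⟩ := td.edges_covered (ee.symm e')
    refine ⟨x, ?_⟩
    have h1 := hedg (ee.symm e')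
    rw [Equiv.apply_symm_apply] at h1
    have h2 : G'.edg e' =
        ⟨(G.edg (ee.symm e')).1, fun i => ev ((G.edg (ee.symm e')).2 i)⟩ :=
      Sigma.ext h1.1 h1.2
    rw [h2]
    exact fun i => Finset.mem_image_of_mem ev (hx i)
  · intro v'
    have hset : {x | v' ∈ (td.bag x).image ev} = {x | ev.symm v' ∈ td.bag x} := by
      ext x
      simp only [Set.mem_setOf_eq, Finset.mem_image]
      constructor
      · rintro ⟨w, hw, rfl⟩
        rwa [Equiv.symm_apply_apply]
      · intro hw
        exact ⟨ev.symm v', hw, Equiv.apply_symm_apply ev v'⟩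
    show (td.T.induce {x | v' ∈ (td.bag x).image ev}).Connected
    rw [hset]
    exact td.vert_connected (ev.symm v')
  · intro s
    have h₁ : s.1 ∈ G.srt := by rw [hsrt]; exact s.2
    have := hsrc s.1 h₁ s.2
    rw [← this]
    exact Finset.mem_image_of_mem ev (td.root_bag ⟨s.1, h₁⟩)

/-- The value of a term using only labels in `τ` has sort included in `τ`. -/
theorem HRT.val_srt_subset (τ : Finset ℕ) :
    ∀ t : HRT Lab ar, t.usesOnly τ → t.val.srt ⊆ τ
  | .zero τ', h => h
  | .edge a s, h => by
    intro x hx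
    obtain ⟨i, _, rfl⟩ := Finset.mem_image.mp hx
    exact h i
  | .restrict τ' t, h => by
    intro x hx
    exact h.1 (Finset.mem_inter.mp hx).2
  | .rename α hα t, h =>
    crename_srt_subset h.1 (HRT.val_srt_subset τ t h.2)
  | .comp t₁ t₂, h => by
    intro x hx
    rcases Finset.mem_union.mp hx with hx | hx
    · exact HRT.val_srt_subset τ t₁ h.1 hx
    · exact HRT.val_srt_subset τ t₂ h.2 hx

section CompTD

open SimpleGraph

/-- The vertex equivalence used in `ccomp`, as an explicit equivalence. -/
def cE (G₁ G₂ : CG Lab ar) :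
    Quot (fuseRel G₁ G₂) ≃ Fin (Nat.card (Quot (fuseRel G₁ G₂))) :=
  Finite.equivFin _

theorem ccomp_src_inl (G₁ G₂ : CG Lab ar) {s : ℕ} (h : s ∈ G₁.srt)
    (hs : s ∈ (ccomp G₁ G₂).srt) :
    (ccomp G₁ G₂).src ⟨s, hs⟩ = cE G₁ G₂ (Quot.mk _ (Sum.inl (G₁.src ⟨s, h⟩))) := by
  simp only [ccomp, cE]
  rw [dif_pos h]

theorem quot_inl_inr (G₁ G₂ : CG Lab ar) (s : ℕ) (h₁ : s ∈ G₁.srt) (h₂ : s ∈ G₂.srt) :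
    Quot.mk (fuseRel G₁ G₂) (Sum.inl (G₁.src ⟨s, h₁⟩)) =
      Quot.mk (fuseRel G₁ G₂) (Sum.inr (G₂.src ⟨s, h₂⟩)) :=
  Quot.sound ⟨s, h₁, h₂, rfl, rfl⟩

theorem ccomp_src_inr (G₁ G₂ : CG Lab ar) {s : ℕ} (h : s ∈ G₂.srt)
    (hs : s ∈ (ccomp G₁ G₂).srt) :
    (ccomp G₁ G₂).src ⟨s, hs⟩ = cE G₁ G₂ (Quot.mk _ (Sum.inr (G₂.src ⟨s, h⟩))) := by
  by_cases h₁ : s ∈ G₁.srt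
  · rw [ccomp_src_inl G₁ G₂ h₁ hs, quot_inl_inr G₁ G₂ s h₁ h]
  · simp only [ccomp, cE]
    rw [dif_neg h₁]

theorem ccomp_edg_inl (G₁ G₂ : CG Lab ar) (e : Fin (ccomp G₁ G₂).m) (e₁ : Fin G₁.m)
    (he : finSumFinEquiv.symm e = Sum.inl e₁) :
    (ccomp G₁ G₂).edg e =
      ⟨(G₁.edg e₁).1, fun j => cE G₁ G₂ (Quot.mk _ (Sum.inl ((G₁.edg e₁).2 j)))⟩ := by
  simp only [ccomp, cE]
  rw [he]

theorem ccomp_edg_inr (G₁ G₂ : CG Lab ar) (e : Fin (ccomp G₁ G₂).m) (e₂ : Fin G₂.m)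
    (he : finSumFinEquiv.symm e = Sum.inr e₂) :
    (ccomp G₁ G₂).edg e =
      ⟨(G₂.edg e₂).1, fun j => cE G₁ G₂ (Quot.mk _ (Sum.inr ((G₂.edg e₂).2 j)))⟩ := by
  simp only [ccomp, cE]
  rw [he]

/-- `x` is a source vertex of one of the two components. -/
def IsSrcV (G₁ G₂ : CG Lab ar) (x : Fin G₁.n ⊕ Fin G₂.n) : Prop :=
  (∃ s h, x = Sum.inl (G₁.src ⟨s, h⟩)) ∨ (∃ s h, x = Sum.inr (G₂.src ⟨s, h⟩))

theorem fuse_classify (G₁ G₂ : CG Lab ar) {x y : Fin G₁.n ⊕ Fin G₂.n}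
    (h : Quot.mk (fuseRel G₁ G₂) x = Quot.mk (fuseRel G₁ G₂) y) :
    x = y ∨ (IsSrcV G₁ G₂ x ∧ IsSrcV G₁ G₂ y) := by
  have h' := Quot.eqvGen_exact h
  clear h
  induction h' with
  | rel a b hab =>
    obtain ⟨s, h₁, h₂, ha, hb⟩ := hab
    exact Or.inr ⟨Or.inl ⟨s, h₁, ha⟩, Or.inr ⟨s, h₂, hb⟩⟩
  | refl a => exact Or.inl rfl
  | symm a b _ ih =>
    rcases ih with rfl | ⟨h1, h2⟩
    exacts [Or.inl rfl, Or.inr ⟨h2, h1⟩]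
  | trans a b c _ _ ih₁ ih₂ =>
    rcases ih₁ with rfl | ⟨h1, h2⟩
    · exact ih₂
    · rcases ih₂ with rfl | ⟨h3, h4⟩
      · exact Or.inr ⟨h1, h2⟩
      · exact Or.inr ⟨h1, h4⟩

end CompTD

section CompTD2

open SimpleGraph

variable (G₁ G₂ : CG Lab ar) (td₁ : TreeDecomp G₁) (td₂ : TreeDecomp G₂)

/-- The bag function for the glued tree decomposition of `ccomp G₁ G₂`. -/
def compBag : Option (td₁.ι ⊕ td₂.ι) → Finset (Fin (ccomp G₁ G₂).n)
  | none => Finset.image (fun s => (ccomp G₁ G₂).src s) ((ccomp G₁ G₂).srt).attach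
  | some (Sum.inl x) => (td₁.bag x).image (fun w => cE G₁ G₂ (Quot.mk _ (Sum.inl w)))
  | some (Sum.inr y) => (td₂.bag y).image (fun w => cE G₁ G₂ (Quot.mk _ (Sum.inr w)))

theorem comp_vert_connected (v : Fin (ccomp G₁ G₂).n) :
    ((glue td₁.T td₂.T td₁.root td₂.root).induce
      {x | v ∈ compBag G₁ G₂ td₁ td₂ x}).Connected := by
  classical
  -- if the class of `v` contains a source vertex of a component, then `v` is in the root bag
  have key_inl : ∀ w : Fin G₁.n, cE G₁ G₂ (Quot.mk _ (Sum.inl w)) = v →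
      (∃ s h, w = G₁.src ⟨s, h⟩) → none ∈ {x | v ∈ compBag G₁ G₂ td₁ td₂ x} := by
    rintro w hw ⟨s, h, rfl⟩
    show v ∈ compBag G₁ G₂ td₁ td₂ none
    refine Finset.mem_image.mpr ⟨⟨s, Finset.mem_union_left _ h⟩, Finset.mem_attach _ _, ?_⟩
    exact (ccomp_src_inl G₁ G₂ h _).trans hw
  have key_inr : ∀ u : Fin G₂.n, cE G₁ G₂ (Quot.mk _ (Sum.inr u)) = v →
      (∃ s h, u = G₂.src ⟨s, h⟩) → none ∈ {x | v ∈ compBag G₁ G₂ td₁ td₂ x} := by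
    rintro u hu ⟨s, h, rfl⟩
    show v ∈ compBag G₁ G₂ td₁ td₂ none
    refine Finset.mem_image.mpr ⟨⟨s, Finset.mem_union_right _ h⟩, Finset.mem_attach _ _, ?_⟩
    exact (ccomp_src_inr G₁ G₂ h _).trans hu
  by_cases hP : none ∈ {x | v ∈ compBag G₁ G₂ td₁ td₂ x}
  · -- `v` is the class of a source; route everything through the new root
    obtain ⟨s, -, hsv⟩ := Finset.mem_image.mp hP
    have hsome : ∃ x₀, cE G₁ G₂ (Quot.mk _ x₀) = v ∧ IsSrcV G₁ G₂ x₀ := by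
      by_cases h₁ : s.1 ∈ G₁.srt
      · refine ⟨Sum.inl (G₁.src ⟨s.1, h₁⟩), ?_, Or.inl ⟨s.1, h₁, rfl⟩⟩
        rw [← ccomp_src_inl G₁ G₂ h₁ s.2]
        exact hsv
      · have h₂ : s.1 ∈ G₂.srt := (Finset.mem_union.mp s.2).resolve_left h₁
        refine ⟨Sum.inr (G₂.src ⟨s.1, h₂⟩), ?_, Or.inr ⟨s.1, h₂, rfl⟩⟩
        rw [← ccomp_src_inr G₁ G₂ h₂ s.2]
        exact hsv
    obtain ⟨x₀, hx₀, hsrc₀⟩ := hsome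
    have all_src : ∀ x, cE G₁ G₂ (Quot.mk _ x) = v → IsSrcV G₁ G₂ x := by
      intro x hx
      rcases fuse_classify G₁ G₂ ((cE G₁ G₂).injective (hx.trans hx₀.symm)) with rfl | ⟨h, -⟩
      exacts [hsrc₀, h]
    have reach_none : ∀ x (hx : x ∈ {x | v ∈ compBag G₁ G₂ td₁ td₂ x}),
        ((glue td₁.T td₂.T td₁.root td₂.root).induce
          {x | v ∈ compBag G₁ G₂ td₁ td₂ x}).Reachable ⟨x, hx⟩ ⟨none, hP⟩ := by
      rintro (_ | a | a) hx
      · exact Reachable.refl _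
      · obtain ⟨w, hwbag, hwv⟩ := Finset.mem_image.mp hx
        have hwsrc : ∃ s h, w = G₁.src ⟨s, h⟩ := by
          rcases all_src (Sum.inl w) hwv with ⟨s, h, heq⟩ | ⟨s, h, heq⟩
          · exact ⟨s, h, Sum.inl.inj heq⟩
          · exact absurd heq (by simp)
        obtain ⟨s, hsh, rfl⟩ := hwsrc
        have hroot : some (Sum.inl td₁.root) ∈ {x | v ∈ compBag G₁ G₂ td₁ td₂ x} :=
          Finset.mem_image.mpr ⟨_, td₁.root_bag ⟨s, hsh⟩, hwv⟩
        have h1 := reach_of_rel_map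
          (G := td₁.T.induce {y | G₁.src ⟨s, hsh⟩ ∈ td₁.bag y})
          (H := (glue td₁.T td₂.T td₁.root td₂.root).induce
            {x | v ∈ compBag G₁ G₂ td₁ td₂ x})
          (fun y => ⟨some (Sum.inl y.1), Finset.mem_image.mpr ⟨_, y.2, hwv⟩⟩)
          (fun y₁ y₂ hadj => Or.inr (glue_adj_inl.mpr hadj))
          ((td₁.vert_connected (G₁.src ⟨s, hsh⟩)).preconnected
            ⟨a, hwbag⟩ ⟨td₁.root, td₁.root_bag ⟨s, hsh⟩⟩)
        refine h1.trans (Adj.reachable ?_)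
        show (glue td₁.T td₂.T td₁.root td₂.root).Adj (some (Sum.inl td₁.root)) none
        exact ((glue_adj_none_inl.mpr rfl).symm)
      · obtain ⟨u, hubag, huv⟩ := Finset.mem_image.mp hx
        have husrc : ∃ s h, u = G₂.src ⟨s, h⟩ := by
          rcases all_src (Sum.inr u) huv with ⟨s, h, heq⟩ | ⟨s, h, heq⟩
          · exact absurd heq (by simp)
          · exact ⟨s, h, Sum.inr.inj heq⟩
        obtain ⟨s, hsh, rfl⟩ := husrc
        have h1 := reach_of_rel_map
          (G := td₂.T.induce {y | G₂.src ⟨s, hsh⟩ ∈ td₂.bag y})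
          (H := (glue td₁.T td₂.T td₁.root td₂.root).induce
            {x | v ∈ compBag G₁ G₂ td₁ td₂ x})
          (fun y => ⟨some (Sum.inr y.1), Finset.mem_image.mpr ⟨_, y.2, huv⟩⟩)
          (fun y₁ y₂ hadj => Or.inr (glue_adj_inr.mpr hadj))
          ((td₂.vert_connected (G₂.src ⟨s, hsh⟩)).preconnected
            ⟨a, hubag⟩ ⟨td₂.root, td₂.root_bag ⟨s, hsh⟩⟩)
        refine h1.trans (Adj.reachable ?_)
        show (glue td₁.T td₂.T td₁.root td₂.root).Adj (some (Sum.inr td₂.root)) none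
        exact ((glue_adj_none_inr.mpr rfl).symm)
    haveI : Nonempty {x // x ∈ {x | v ∈ compBag G₁ G₂ td₁ td₂ x}} := ⟨⟨none, hP⟩⟩
    exact Connected.mk fun x y =>
      (reach_none x.1 x.2).trans (reach_none y.1 y.2).symm
  · -- `v` is the class of a unique non-source vertex
    obtain ⟨z, hz⟩ : ∃ z, cE G₁ G₂ (Quot.mk _ z) = v := by
      obtain ⟨z, hz⟩ := Quot.exists_rep ((cE G₁ G₂).symm v)
      exact ⟨z, (congrArg (cE G₁ G₂) hz).trans (Equiv.apply_symm_apply _ _)⟩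
    rcases z with w | u
    · have hwns : ¬ ∃ s h, w = G₁.src ⟨s, h⟩ := fun hc => hP (key_inl w hz hc)
      have hchar : ∀ x, x ∈ {x | v ∈ compBag G₁ G₂ td₁ td₂ x} →
          ∃ a : td₁.ι, x = some (Sum.inl a) ∧ w ∈ td₁.bag a := by
        rintro (_ | a | a) hx
        · exact absurd hx hP
        · obtain ⟨w', hw'bag, hw'v⟩ := Finset.mem_image.mp hx
          by_cases hww : w' = w
          · exact ⟨a, rfl, hww ▸ hw'bag⟩
          · exfalso
            rcases fuse_classify G₁ G₂ ((cE G₁ G₂).injective (hw'v.trans hz.symm)) with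
              heq | ⟨-, hsrc⟩
            · exact hww (Sum.inl.inj heq)
            · rcases hsrc with ⟨s, h, heq⟩ | ⟨s, h, heq⟩
              · exact hwns ⟨s, h, Sum.inl.inj heq⟩
              · exact absurd heq (by simp)
        · exfalso
          obtain ⟨u', hu'bag, hu'v⟩ := Finset.mem_image.mp hx
          rcases fuse_classify G₁ G₂ ((cE G₁ G₂).injective (hz.trans hu'v.symm)) with
            heq | ⟨hsrc, -⟩
          · exact absurd heq (by simp)
          · rcases hsrc with ⟨s, h, heq⟩ | ⟨s, h, heq⟩
            · exact hwns ⟨s, h, Sum.inl.inj heq⟩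
            · exact absurd heq (by simp)
      obtain ⟨⟨a₀, ha₀⟩⟩ := (td₁.vert_connected w).nonempty
      have ha₀S : some (Sum.inl a₀) ∈ {x | v ∈ compBag G₁ G₂ td₁ td₂ x} :=
        Finset.mem_image.mpr ⟨w, ha₀, hz⟩
      have reach_base : ∀ x (hx : x ∈ {x | v ∈ compBag G₁ G₂ td₁ td₂ x}),
          ((glue td₁.T td₂.T td₁.root td₂.root).induce
            {x | v ∈ compBag G₁ G₂ td₁ td₂ x}).Reachable ⟨x, hx⟩ ⟨some (Sum.inl a₀), ha₀S⟩ := by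
        intro x hx
        obtain ⟨a, rfl, hab⟩ := hchar x hx
        exact reach_of_rel_map
          (G := td₁.T.induce {y | w ∈ td₁.bag y})
          (H := (glue td₁.T td₂.T td₁.root td₂.root).induce
            {x | v ∈ compBag G₁ G₂ td₁ td₂ x})
          (fun y => ⟨some (Sum.inl y.1), Finset.mem_image.mpr ⟨w, y.2, hz⟩⟩)
          (fun y₁ y₂ hadj => Or.inr (glue_adj_inl.mpr hadj))
          ((td₁.vert_connected w).preconnected ⟨a, hab⟩ ⟨a₀, ha₀⟩)
      haveI : Nonempty {x // x ∈ {x | v ∈ compBag G₁ G₂ td₁ td₂ x}} :=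
        ⟨⟨some (Sum.inl a₀), ha₀S⟩⟩
      exact Connected.mk fun x y =>
        (reach_base x.1 x.2).trans (reach_base y.1 y.2).symm
    · have huns : ¬ ∃ s h, u = G₂.src ⟨s, h⟩ := fun hc => hP (key_inr u hz hc)
      have hchar : ∀ x, x ∈ {x | v ∈ compBag G₁ G₂ td₁ td₂ x} →
          ∃ a : td₂.ι, x = some (Sum.inr a) ∧ u ∈ td₂.bag a := by
        rintro (_ | a | a) hx
        · exact absurd hx hP
        · exfalso
          obtain ⟨w', hw'bag, hw'v⟩ := Finset.mem_image.mp hx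
          rcases fuse_classify G₁ G₂ ((cE G₁ G₂).injective (hz.trans hw'v.symm)) with
            heq | ⟨hsrc, -⟩
          · exact absurd heq (by simp)
          · rcases hsrc with ⟨s, h, heq⟩ | ⟨s, h, heq⟩
            · exact absurd heq (by simp)
            · exact huns ⟨s, h, Sum.inr.inj heq⟩
        · obtain ⟨u', hu'bag, hu'v⟩ := Finset.mem_image.mp hx
          by_cases huu : u' = u
          · exact ⟨a, rfl, huu ▸ hu'bag⟩
          · exfalso
            rcases fuse_classify G₁ G₂ ((cE G₁ G₂).injective (hu'v.trans hz.symm)) with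
              heq | ⟨-, hsrc⟩
            · exact huu (Sum.inr.inj heq)
            · rcases hsrc with ⟨s, h, heq⟩ | ⟨s, h, heq⟩
              · exact absurd heq (by simp)
              · exact huns ⟨s, h, Sum.inr.inj heq⟩
      obtain ⟨⟨a₀, ha₀⟩⟩ := (td₂.vert_connected u).nonempty
      have ha₀S : some (Sum.inr a₀) ∈ {x | v ∈ compBag G₁ G₂ td₁ td₂ x} :=
        Finset.mem_image.mpr ⟨u, ha₀, hz⟩
      have reach_base : ∀ x (hx : x ∈ {x | v ∈ compBag G₁ G₂ td₁ td₂ x}),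
          ((glue td₁.T td₂.T td₁.root td₂.root).induce
            {x | v ∈ compBag G₁ G₂ td₁ td₂ x}).Reachable ⟨x, hx⟩ ⟨some (Sum.inr a₀), ha₀S⟩ := by
        intro x hx
        obtain ⟨a, rfl, hab⟩ := hchar x hx
        exact reach_of_rel_map
          (G := td₂.T.induce {y | u ∈ td₂.bag y})
          (H := (glue td₁.T td₂.T td₁.root td₂.root).induce
            {x | v ∈ compBag G₁ G₂ td₁ td₂ x})
          (fun y => ⟨some (Sum.inr y.1), Finset.mem_image.mpr ⟨u, y.2, hz⟩⟩)
          (fun y₁ y₂ hadj => Or.inr (glue_adj_inr.mpr hadj))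
          ((td₂.vert_connected u).preconnected ⟨a, hab⟩ ⟨a₀, ha₀⟩)
      haveI : Nonempty {x // x ∈ {x | v ∈ compBag G₁ G₂ td₁ td₂ x}} :=
        ⟨⟨some (Sum.inr a₀), ha₀S⟩⟩
      exact Connected.mk fun x y =>
        (reach_base x.1 x.2).trans (reach_base y.1 y.2).symm

instance optionFinite {α : Type} [Finite α] : Finite (Option α) :=
  Finite.of_equiv _ (Equiv.optionEquivSumPUnit.{0,0} α).symm

theorem td_comp (G₁ G₂ : CG Lab ar) {k : ℕ}
    (H₁ : ∃ td : TreeDecomp G₁, ∀ x, (td.bag x).card ≤ k)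
    (H₂ : ∃ td : TreeDecomp G₂, ∀ x, (td.bag x).card ≤ k)
    (hs : (G₁.srt ∪ G₂.srt).card ≤ k) :
    ∃ td : TreeDecomp (ccomp G₁ G₂), ∀ x, (td.bag x).card ≤ k := by
  obtain ⟨td₁, hb₁⟩ := H₁
  obtain ⟨td₂, hb₂⟩ := H₂
  haveI hf1 := td₁.finι
  haveI hf2 := td₂.finι
  refine ⟨{
    ι := Option (td₁.ι ⊕ td₂.ι)
    finι := inferInstance
    T := glue td₁.T td₂.T td₁.root td₂.root
    isTree := glue_isTree td₁.isTree td₂.isTree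
    root := none
    bag := compBag G₁ G₂ td₁ td₂
    edges_covered := ?_
    vert_connected := comp_vert_connected G₁ G₂ td₁ td₂
    root_bag := fun s => Finset.mem_image_of_mem _ (Finset.mem_attach _ s) }, ?_⟩
  · intro e
    rcases he : finSumFinEquiv.symm e with e₁ | e₂
    · obtain ⟨x, hx⟩ := td₁.edges_covered e₁
      refine ⟨some (Sum.inl x), ?_⟩
      rw [ccomp_edg_inl G₁ G₂ e e₁ he]
      exact fun i => Finset.mem_image_of_mem _ (hx i)
    · obtain ⟨x, hx⟩ := td₂.edges_covered e₂
      refine ⟨some (Sum.inr x), ?_⟩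
      rw [ccomp_edg_inr G₁ G₂ e e₂ he]
      exact fun i => Finset.mem_image_of_mem _ (hx i)
  · rintro (_ | a | a)
    · refine le_trans Finset.card_image_le ?_
      rw [Finset.card_attach]
      exact hs
    · exact le_trans Finset.card_image_le (hb₁ a)
    · exact le_trans Finset.card_image_le (hb₂ a)

end CompTD2


theorem exists_td (τ : Finset ℕ) :
    ∀ t : HRT Lab ar, t.usesOnly τ →
      ∃ td : TreeDecomp t.val, ∀ x, (td.bag x).card ≤ τ.card
  | .zero τ', h => by
    refine ⟨tdTrivial _, fun x => ?_⟩
    simp only [tdTrivial, Finset.card_univ, Fintype.card_fin]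
    exact Finset.card_le_card h
  | .edge a s, h => by
    refine ⟨tdTrivial _, fun x => ?_⟩
    simp only [tdTrivial, Finset.card_univ, Fintype.card_fin]
    show (Finset.image s Finset.univ).card ≤ τ.card
    refine Finset.card_le_card fun x hx => ?_
    obtain ⟨i, _, rfl⟩ := Finset.mem_image.mp hx
    exact h i
  | .restrict τ' t, h => by
    obtain ⟨td, hb⟩ := exists_td τ t h.2
    exact ⟨tdRestrict τ' _ td, hb⟩
  | .rename α hα t, h => by
    obtain ⟨td, hb⟩ := exists_td τ t h.2
    exact ⟨tdRename α _ td, hb⟩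
  | .comp t₁ t₂, h => by
    refine td_comp _ _ (exists_td τ t₁ h.1) (exists_td τ t₂ h.2) ?_
    refine Finset.card_le_card (Finset.union_subset ?_ ?_)
    · exact HRT.val_srt_subset τ t₁ h.1
    · exact HRT.val_srt_subset τ t₂ h.2

end TreeWidthProof2

/-- For every finite sort `τ`, every graph that is the value of a
ground term over the `τ`-restricted HR signature has tree-width at most `|τ| − 1`,
i.e., it has a tree decomposition all of whose bags have at most `|τ|` elements. -/
theorem term_generated_graphs_have_bounded_treewidth {Lab : Type} {ar : Lab → ℕ}
    (τ : Finset ℕ) (t : HRT Lab ar) (ht : t.usesOnly τ) (G : CG Lab ar)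
    (hG : GIso t.val G) :
    ∃ td : TreeDecomp G, ∀ x, (td.bag x).card ≤ τ.card :=
  td_of_iso hG (exists_td τ t ht)

end

end GraphCF
end

section
/- For a set L of graphs with no sources, graphs G₁ and G₂ are equivalent under the syntactic congruence of L in the HR graph algebra if and only if they have the same sort and for every graph G and every finite sort τ: restrict_τ(G₁ ∥ G) ∈ L ⟺ restrict_τ(G₂ ∥ G) ∈ L. -/
set_option autoImplicit false

namespace GraphCF

noncomputable section

variable {Lab : Type} {ar : Lab → ℕ}

/-! ### Auxiliary lemmas for Statement 9 -/

section Aux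

variable {Lab : Type} {ar : Lab → ℕ}

/-- Extensionality for graphs of empty sort. -/
theorem CG.ext_empty : ∀ {G G' : CG Lab ar}, G.n = G'.n → G.m = G'.m →
    HEq G.edg G'.edg → G.srt = ∅ → G'.srt = ∅ → G = G' := by
  rintro ⟨n, m, edg, srt, src⟩ ⟨n', m', edg', srt', src'⟩ hn hm he h1 h2
  dsimp at hn hm he h1 h2
  subst hn; subst hm; subst h1; subst h2
  cases he
  have : src = src' := by
    funext s
    exact absurd s.2 (Finset.notMem_empty s.1)
  rw [this]

theorem GIso.refl (G : CG Lab ar) : GIso G G :=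
  ⟨rfl, Equiv.refl _, Equiv.refl _, fun e => ⟨rfl, HEq.refl _⟩, fun s h₁ h₂ => rfl⟩

/-- The edge condition of `GIso` as a sigma-type equation. -/
theorem GIso.edg_eq {G₁ G₂ : CG Lab ar} (h : GIso G₁ G₂) :
    ∀ (ev : Fin G₁.n ≃ Fin G₂.n) (ee : Fin G₁.m ≃ Fin G₂.m),
    (∀ e, (G₂.edg (ee e)).1 = (G₁.edg e).1 ∧
      HEq (G₂.edg (ee e)).2 (fun i => ev ((G₁.edg e).2 i))) →
    ∀ e, G₂.edg (ee e) = ⟨(G₁.edg e).1, fun i => ev ((G₁.edg e).2 i)⟩ := by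
  intro ev ee hc e
  exact Sigma.ext (hc e).1 (hc e).2

theorem GIso.symm {G₁ G₂ : CG Lab ar} (h : GIso G₁ G₂) : GIso G₂ G₁ := by
  obtain ⟨hsrt, ev, ee, hedg, hsrc⟩ := h
  refine ⟨hsrt.symm, ev.symm, ee.symm, ?_, ?_⟩
  · intro e
    have key : G₂.edg (ee (ee.symm e)) =
        ⟨(G₁.edg (ee.symm e)).1, fun i => ev ((G₁.edg (ee.symm e)).2 i)⟩ :=
      Sigma.ext (hedg (ee.symm e)).1 (hedg (ee.symm e)).2
    rw [Equiv.apply_symm_apply] at key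
    have key2 : (fun p : (a : Lab) × (Fin (ar a) → Fin G₂.n) =>
        (⟨p.1, fun i => ev.symm (p.2 i)⟩ : (a : Lab) × (Fin (ar a) → Fin G₁.n)))
        (G₂.edg e) = ⟨(G₁.edg (ee.symm e)).1,
          fun i => ev.symm (ev ((G₁.edg (ee.symm e)).2 i))⟩ := by rw [key]
    simp only [Equiv.symm_apply_apply] at key2
    have key3 : (⟨(G₂.edg e).1, fun i => ev.symm ((G₂.edg e).2 i)⟩ :
        (a : Lab) × (Fin (ar a) → Fin G₁.n)) = G₁.edg (ee.symm e) := by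
      rw [key2]
    rw [← key3]
    exact ⟨rfl, HEq.rfl⟩
  · intro s h₂ h₁
    have := hsrc s h₁ h₂
    rw [← this, Equiv.symm_apply_apply]

theorem GIso.trans {G₁ G₂ G₃ : CG Lab ar} (h : GIso G₁ G₂) (h' : GIso G₂ G₃) :
    GIso G₁ G₃ := by
  obtain ⟨hsrt, ev, ee, hedg, hsrc⟩ := h
  obtain ⟨hsrt', ev', ee', hedg', hsrc'⟩ := h'
  refine ⟨hsrt.trans hsrt', ev.trans ev', ee.trans ee', ?_, ?_⟩
  · intro e
    have k1 : G₂.edg (ee e) = ⟨(G₁.edg e).1, fun i => ev ((G₁.edg e).2 i)⟩ :=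
      Sigma.ext (hedg e).1 (hedg e).2
    have k2 : G₃.edg (ee' (ee e)) =
        ⟨(G₂.edg (ee e)).1, fun i => ev' ((G₂.edg (ee e)).2 i)⟩ :=
      Sigma.ext (hedg' (ee e)).1 (hedg' (ee e)).2
    rw [k1] at k2
    simp only [Equiv.trans_apply]
    rw [k2]
    exact ⟨rfl, HEq.rfl⟩
  · intro s h₁ h₃
    have h₂ : s ∈ G₂.srt := hsrt ▸ h₁
    simp only [Equiv.trans_apply]
    rw [hsrc s h₁ h₂, hsrc' s h₂ h₃]

theorem GIso.mem_iff {L : Set (CG Lab ar)} (hiso : IsoClosed L) {G₁ G₂ : CG Lab ar}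
    (h : GIso G₁ G₂) : G₁ ∈ L ↔ G₂ ∈ L :=
  ⟨hiso G₁ G₂ h, hiso G₂ G₁ h.symm⟩

/-- `crestrict` preserves isomorphism. -/
theorem GIso.crestrict (τ : Finset ℕ) {G₁ G₂ : CG Lab ar} (h : GIso G₁ G₂) :
    GIso (crestrict τ G₁) (crestrict τ G₂) := by
  obtain ⟨hsrt, ev, ee, hedg, hsrc⟩ := h
  exact ⟨by rw [crestrict_srt, crestrict_srt, hsrt], ev, ee, hedg,
    fun s h₁ h₂ => hsrc s (Finset.mem_inter.mp h₁).1 (Finset.mem_inter.mp h₂).1⟩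

/-- The canonical vertex equivalence used in `ccomp`. -/
noncomputable def fuseE (A B : CG Lab ar) : Quot (fuseRel A B) ≃ Fin (ccomp A B).n :=
  Finite.equivFin _

theorem ccomp_src₁ (A B : CG Lab ar) (s : ℕ) (h : s ∈ (ccomp A B).srt)
    (h₁ : s ∈ A.srt) :
    (ccomp A B).src ⟨s, h⟩ = fuseE A B (Quot.mk _ (Sum.inl (A.src ⟨s, h₁⟩))) := by
  simp [ccomp, fuseE, h₁]
  rfl

theorem ccomp_src₂ (A B : CG Lab ar) (s : ℕ) (h : s ∈ (ccomp A B).srt)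
    (h₁ : s ∉ A.srt) (h₂ : s ∈ B.srt) :
    (ccomp A B).src ⟨s, h⟩ = fuseE A B (Quot.mk _ (Sum.inr (B.src ⟨s, h₂⟩))) := by
  simp [ccomp, fuseE, h₁]
  rfl

theorem ccomp_edg (A B : CG Lab ar) (i : Fin (A.m + B.m)) :
    (ccomp A B).edg i =
      match finSumFinEquiv.symm i with
      | Sum.inl e₁ => ⟨(A.edg e₁).1,
          fun j => fuseE A B (Quot.mk _ (Sum.inl ((A.edg e₁).2 j)))⟩
      | Sum.inr e₂ => ⟨(B.edg e₂).1,
          fun j => fuseE A B (Quot.mk _ (Sum.inr ((B.edg e₂).2 j)))⟩ := rfl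

theorem ccomp_edg_inl_s9 (A B : CG Lab ar) (i : Fin A.m) :
    (ccomp A B).edg (finSumFinEquiv (Sum.inl i)) =
      ⟨(A.edg i).1, fun j => fuseE A B (Quot.mk _ (Sum.inl ((A.edg i).2 j)))⟩ := by
  rw [ccomp_edg, Equiv.symm_apply_apply]

theorem ccomp_edg_inr_s9 (A B : CG Lab ar) (i : Fin B.m) :
    (ccomp A B).edg (finSumFinEquiv (Sum.inr i)) =
      ⟨(B.edg i).1, fun j => fuseE A B (Quot.mk _ (Sum.inr ((B.edg i).2 j)))⟩ := by
  rw [ccomp_edg, Equiv.symm_apply_apply]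

/-- The quotient equivalence underlying commutativity of `ccomp`. -/
noncomputable def commQ (A B : CG Lab ar) :
    Quot (fuseRel A B) ≃ Quot (fuseRel B A) where
  toFun := Quot.lift (fun x => Quot.mk _ x.swap) (by
    rintro x y ⟨s, h₁, h₂, rfl, rfl⟩
    exact (Quot.sound ⟨s, h₂, h₁, rfl, rfl⟩).symm)
  invFun := Quot.lift (fun x => Quot.mk _ x.swap) (by
    rintro x y ⟨s, h₁, h₂, rfl, rfl⟩
    exact (Quot.sound ⟨s, h₂, h₁, rfl, rfl⟩).symm)
  left_inv := by
    apply Quot.ind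
    intro x
    simp
  right_inv := by
    apply Quot.ind
    intro x
    simp

theorem ccomp_comm (A B : CG Lab ar) : GIso (ccomp A B) (ccomp B A) := by
  refine ⟨Finset.union_comm _ _,
    (fuseE A B).symm.trans ((commQ A B).trans (fuseE B A)),
    finSumFinEquiv.symm.trans ((Equiv.sumComm _ _).trans finSumFinEquiv), ?_, ?_⟩
  · intro e
    dsimp only [ccomp, fuseE, Equiv.trans_apply, Equiv.sumComm_apply]
    rcases h : finSumFinEquiv.symm e with e₁ | e₂ <;>
      erw [Equiv.symm_apply_apply, h] <;>
      exact ⟨rfl, heq_of_eq (by funext j; erw [Equiv.trans_apply, Equiv.trans_apply, Equiv.symm_apply_apply]; rfl)⟩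
  · intro s h₁ h₂
    by_cases ha : s ∈ A.srt
    · by_cases hb : s ∈ B.srt
      · rw [ccomp_src₁ A B s h₁ ha, ccomp_src₁ B A s h₂ hb]
        simp only [Equiv.trans_apply, Equiv.symm_apply_apply]
        have : Quot.mk (fuseRel B A) (Sum.inl (B.src ⟨s, hb⟩)) =
            Quot.mk (fuseRel B A) (Sum.inr (A.src ⟨s, ha⟩)) :=
          Quot.sound ⟨s, hb, ha, rfl, rfl⟩
        simp [commQ, this]
      · rw [ccomp_src₁ A B s h₁ ha, ccomp_src₂ B A s h₂ hb ha]
        simp [commQ]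
    · have hb : s ∈ B.srt := by
        rcases Finset.mem_union.mp h₁ with h | h
        · exact absurd h ha
        · exact h
      rw [ccomp_src₂ A B s h₁ ha hb, ccomp_src₁ B A s h₂ hb]
      simp [commQ]

/-- The quotient equivalence for composing with the empty graph. -/
noncomputable def zeroQ (A : CG Lab ar) :
    Quot (fuseRel A (czero (∅ : Finset ℕ))) ≃ Fin A.n where
  toFun := Quot.lift
    (Sum.elim id (fun c => Fin.elim0 (Fin.cast (by simp [czero]) c)))
    (by
      rintro x y ⟨s, h₁, h₂, rfl, rfl⟩
      exact absurd h₂ (Finset.notMem_empty s))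
  invFun := fun v => Quot.mk _ (Sum.inl v)
  left_inv := by
    apply Quot.ind
    rintro (v | c)
    · rfl
    · exact Fin.elim0 (Fin.cast (by simp [czero]) c)
  right_inv := fun v => rfl

theorem ccomp_czero (A : CG Lab ar) : GIso (ccomp A (czero ∅)) A := by
  have hm : A.m + (czero (∅ : Finset ℕ) : CG Lab ar).m = A.m := Nat.add_zero _
  refine ⟨by simp [ccomp_srt, czero], (fuseE A _).symm.trans (zeroQ A),
    finCongr hm, ?_, ?_⟩
  · intro e
    have h : finSumFinEquiv.symm e = Sum.inl (finCongr hm e) := by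
      erw [Equiv.symm_apply_eq]
      exact Fin.ext rfl
    erw [ccomp_edg, h]
    refine ⟨rfl, heq_of_eq ?_⟩
    funext j
    simp [zeroQ]
    rfl
  · intro s h₁ h₂
    rw [ccomp_src₁ A _ s h₁ h₂]
    simp [zeroQ]
    rfl

/-! #### Associativity of `ccomp` up to isomorphism -/

section Assoc

variable (A B C : CG Lab ar)

/-- Map `A ∥ B`-vertices into the quotient of `A ∥ (B ∥ C)`. -/
noncomputable def qmapL : Quot (fuseRel A B) → Quot (fuseRel A (ccomp B C)) :=
  Quot.lift
    (Sum.elim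
      (fun a => Quot.mk _ (Sum.inl a))
      (fun b => Quot.mk _ (Sum.inr (fuseE B C (Quot.mk _ (Sum.inl b))))))
    (by
      rintro x y ⟨s, h₁, h₂, rfl, rfl⟩
      dsimp only [Sum.elim_inl, Sum.elim_inr]
      have hbc : s ∈ (ccomp B C).srt := by
        rw [ccomp_srt]; exact Finset.mem_union_left _ h₂
      have k : fuseE B C (Quot.mk _ (Sum.inl (B.src ⟨s, h₂⟩))) =
          (ccomp B C).src ⟨s, hbc⟩ := (ccomp_src₁ B C s hbc h₂).symm
      rw [k]
      exact Quot.sound ⟨s, h₁, hbc, rfl, rfl⟩)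

/-- Map `B ∥ C`-vertices into the quotient of `(A ∥ B) ∥ C`. -/
noncomputable def qmapR : Quot (fuseRel B C) → Quot (fuseRel (ccomp A B) C) :=
  Quot.lift
    (Sum.elim
      (fun b => Quot.mk _ (Sum.inl (fuseE A B (Quot.mk _ (Sum.inr b)))))
      (fun c => Quot.mk _ (Sum.inr c)))
    (by
      rintro x y ⟨s, hb, hc, rfl, rfl⟩
      dsimp only [Sum.elim_inl, Sum.elim_inr]
      have hab : s ∈ (ccomp A B).srt := by
        rw [ccomp_srt]; exact Finset.mem_union_right _ hb
      have k : Quot.mk (fuseRel (ccomp A B) C)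
          (Sum.inl (fuseE A B (Quot.mk _ (Sum.inr (B.src ⟨s, hb⟩))))) =
          Quot.mk _ (Sum.inl ((ccomp A B).src ⟨s, hab⟩)) := by
        by_cases ha : s ∈ A.srt
        · rw [ccomp_src₁ A B s hab ha]
          exact congrArg (fun q => Quot.mk (fuseRel (ccomp A B) C)
            (Sum.inl (fuseE A B q))) (Quot.sound ⟨s, ha, hb, rfl, rfl⟩).symm
        · rw [ccomp_src₂ A B s hab ha hb]
      exact k.trans (Quot.sound ⟨s, hab, hc, rfl, rfl⟩))

noncomputable def assocΦ : Quot (fuseRel (ccomp A B) C) → Quot (fuseRel A (ccomp B C)) :=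
  Quot.lift
    (Sum.elim
      (fun v => qmapL A B C ((fuseE A B).symm v))
      (fun c => Quot.mk _ (Sum.inr (fuseE B C (Quot.mk _ (Sum.inr c))))))
    (by
      rintro x y ⟨s, h₁, h₂, rfl, rfl⟩
      dsimp only [Sum.elim_inl, Sum.elim_inr]
      have hbc : s ∈ (ccomp B C).srt := by
        rw [ccomp_srt]; exact Finset.mem_union_right _ h₂
      have key : Quot.mk (fuseRel A (ccomp B C)) (Sum.inr ((ccomp B C).src ⟨s, hbc⟩)) =
          Quot.mk _ (Sum.inr (fuseE B C (Quot.mk _ (Sum.inr (C.src ⟨s, h₂⟩))))) := by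
        by_cases hb : s ∈ B.srt
        · rw [ccomp_src₁ B C s hbc hb]
          exact congrArg (fun q => Quot.mk (fuseRel A (ccomp B C))
            (Sum.inr (fuseE B C q))) (Quot.sound ⟨s, hb, h₂, rfl, rfl⟩)
        · rw [ccomp_src₂ B C s hbc hb h₂]
      by_cases ha : s ∈ A.srt
      · rw [ccomp_src₁ A B s h₁ ha, Equiv.symm_apply_apply]
        exact (Quot.sound ⟨s, ha, hbc, rfl, rfl⟩).trans key
      · have hb : s ∈ B.srt := by
          rcases Finset.mem_union.mp h₁ with h | h
          · exact absurd h ha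
          · exact h
        rw [ccomp_src₂ A B s h₁ ha hb, Equiv.symm_apply_apply]
        refine Eq.trans ?_ key
        rw [ccomp_src₁ B C s hbc hb]
        rfl)

noncomputable def assocΨ : Quot (fuseRel A (ccomp B C)) → Quot (fuseRel (ccomp A B) C) :=
  Quot.lift
    (Sum.elim
      (fun a => Quot.mk _ (Sum.inl (fuseE A B (Quot.mk _ (Sum.inl a)))))
      (fun v => qmapR A B C ((fuseE B C).symm v)))
    (by
      rintro x y ⟨s, ha, hbc, rfl, rfl⟩
      dsimp only [Sum.elim_inl, Sum.elim_inr]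
      have hab : s ∈ (ccomp A B).srt := by
        rw [ccomp_srt]; exact Finset.mem_union_left _ ha
      by_cases hb : s ∈ B.srt
      · rw [ccomp_src₁ B C s hbc hb, Equiv.symm_apply_apply]
        exact congrArg (fun q => Quot.mk (fuseRel (ccomp A B) C)
          (Sum.inl (fuseE A B q))) (Quot.sound ⟨s, ha, hb, rfl, rfl⟩)
      · have hc : s ∈ C.srt := by
          rcases Finset.mem_union.mp hbc with h | h
          · exact absurd h hb
          · exact h
        rw [ccomp_src₂ B C s hbc hb hc, Equiv.symm_apply_apply]
        have key : Quot.mk (fuseRel (ccomp A B) C) (Sum.inl ((ccomp A B).src ⟨s, hab⟩)) =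
            Quot.mk _ (Sum.inr (C.src ⟨s, hc⟩)) := Quot.sound ⟨s, hab, hc, rfl, rfl⟩
        rw [ccomp_src₁ A B s hab ha] at key
        exact key)

theorem assocΦ_inl (q : Quot (fuseRel A B)) :
    assocΦ A B C (Quot.mk _ (Sum.inl (fuseE A B q))) = qmapL A B C q := by
  show qmapL A B C ((fuseE A B).symm (fuseE A B q)) = qmapL A B C q
  rw [Equiv.symm_apply_apply]

theorem assocΨ_inr (q : Quot (fuseRel B C)) :
    assocΨ A B C (Quot.mk _ (Sum.inr (fuseE B C q))) = qmapR A B C q := by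
  show qmapR A B C ((fuseE B C).symm (fuseE B C q)) = qmapR A B C q
  rw [Equiv.symm_apply_apply]

/-- The quotient equivalence underlying associativity of `ccomp`. -/
noncomputable def assocQ : Quot (fuseRel (ccomp A B) C) ≃ Quot (fuseRel A (ccomp B C)) where
  toFun := assocΦ A B C
  invFun := assocΨ A B C
  left_inv := by
    apply Quot.ind
    rintro (v | c)
    · conv_lhs => rw [← Equiv.apply_symm_apply (fuseE A B) v]
      conv_rhs => rw [← Equiv.apply_symm_apply (fuseE A B) v]
      generalize (fuseE A B).symm v = q
      induction q using Quot.ind with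
      | _ x =>
        rcases x with a | b
        · rw [assocΦ_inl]
          rfl
        · rw [assocΦ_inl]
          show assocΨ A B C (Quot.mk _ (Sum.inr (fuseE B C (Quot.mk _ (Sum.inl b))))) = _
          rw [assocΨ_inr]
          rfl
    · show assocΨ A B C (Quot.mk _ (Sum.inr (fuseE B C (Quot.mk _ (Sum.inr c))))) = _
      rw [assocΨ_inr]
      rfl
  right_inv := by
    apply Quot.ind
    rintro (a | v)
    · show assocΦ A B C (Quot.mk _ (Sum.inl (fuseE A B (Quot.mk _ (Sum.inl a))))) = _
      rw [assocΦ_inl]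
      rfl
    · conv_lhs => rw [← Equiv.apply_symm_apply (fuseE B C) v]
      conv_rhs => rw [← Equiv.apply_symm_apply (fuseE B C) v]
      generalize (fuseE B C).symm v = q
      induction q using Quot.ind with
      | _ x =>
        rcases x with b | c
        · rw [assocΨ_inr]
          show assocΦ A B C (Quot.mk _ (Sum.inl (fuseE A B (Quot.mk _ (Sum.inr b))))) = _
          rw [assocΦ_inl]
          rfl
        · rw [assocΨ_inr]
          rfl

theorem assocQ_inl_inl (a : Fin A.n) :
    assocQ A B C (Quot.mk _ (Sum.inl (fuseE A B (Quot.mk _ (Sum.inl a))))) =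
      Quot.mk _ (Sum.inl a) :=
  assocΦ_inl A B C (Quot.mk _ (Sum.inl a))

theorem assocQ_inl_inr (b : Fin B.n) :
    assocQ A B C (Quot.mk _ (Sum.inl (fuseE A B (Quot.mk _ (Sum.inr b))))) =
      Quot.mk _ (Sum.inr (fuseE B C (Quot.mk _ (Sum.inl b)))) :=
  assocΦ_inl A B C (Quot.mk _ (Sum.inr b))

theorem assocQ_inr (c : Fin C.n) :
    assocQ A B C (Quot.mk _ (Sum.inr c)) =
      Quot.mk _ (Sum.inr (fuseE B C (Quot.mk _ (Sum.inr c)))) := rfl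

theorem ccomp_assoc : GIso (ccomp (ccomp A B) C) (ccomp A (ccomp B C)) := by
  refine ⟨by simp [ccomp_srt, Finset.union_assoc],
    (fuseE (ccomp A B) C).symm.trans ((assocQ A B C).trans (fuseE A (ccomp B C))),
    finSumFinEquiv.symm.trans ((Equiv.sumCongr finSumFinEquiv.symm (Equiv.refl _)).trans
      ((Equiv.sumAssoc _ _ _).trans ((Equiv.sumCongr (Equiv.refl _) finSumFinEquiv).trans
        finSumFinEquiv))), ?_, ?_⟩
  · intro e
    have key : (ccomp A (ccomp B C)).edg
        ((finSumFinEquiv.symm.trans ((finSumFinEquiv.symm.sumCongr (Equiv.refl (Fin C.m))).trans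
          ((Equiv.sumAssoc (Fin A.m) (Fin B.m) (Fin C.m)).trans
            (((Equiv.refl (Fin A.m)).sumCongr finSumFinEquiv).trans finSumFinEquiv)))) e) =
        ⟨((ccomp (ccomp A B) C).edg e).1, fun i =>
          ((fuseE (ccomp A B) C).symm.trans ((assocQ A B C).trans (fuseE A (ccomp B C))))
            (((ccomp (ccomp A B) C).edg e).2 i)⟩ := ?_
    · exact Sigma.ext_iff.mp key
    rcases h : (finSumFinEquiv (m := A.m + B.m) (n := C.m)).symm e with e12 | ec
    · have he : e = (finSumFinEquiv (m := A.m + B.m) (n := C.m)) (Sum.inl e12) :=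
        Equiv.symm_apply_eq _ |>.mp h
      subst he
      rcases h2 : finSumFinEquiv.symm e12 with ea | eb
      · have he2 : e12 = finSumFinEquiv (Sum.inl ea) := Equiv.symm_apply_eq _ |>.mp h2
        subst he2
        simp only [Equiv.trans_apply, Equiv.symm_apply_apply,
          Equiv.sumCongr_apply, Equiv.refl_apply, Sum.map_inl, Sum.map_inr,
          Equiv.sumAssoc_apply_inl_inl, Equiv.sumAssoc_apply_inl_inr, Equiv.sumAssoc_apply_inr]
        have k1 : (ccomp (ccomp A B) C).edg
            ((finSumFinEquiv (m := A.m + B.m) (n := C.m))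
              (Sum.inl (finSumFinEquiv (Sum.inl ea)))) =
            ⟨(A.edg ea).1, fun j => fuseE (ccomp A B) C (Quot.mk _ (Sum.inl
              (fuseE A B (Quot.mk _ (Sum.inl ((A.edg ea).2 j))))))⟩ :=
          (ccomp_edg_inl_s9 (ccomp A B) C (finSumFinEquiv (Sum.inl ea))).trans
            (by rw [ccomp_edg_inl_s9 A B ea])
        have k2 : (ccomp A (ccomp B C)).edg
            ((finSumFinEquiv (m := A.m) (n := B.m + C.m)) (Sum.inl ea)) =
            ⟨(A.edg ea).1, fun j => fuseE A (ccomp B C)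
              (Quot.mk _ (Sum.inl ((A.edg ea).2 j)))⟩ :=
          ccomp_edg_inl_s9 A (ccomp B C) ea
        rw [k1, k2]
        refine Sigma.ext rfl (heq_of_eq (funext fun j => ?_))
        simp only [Equiv.symm_apply_apply]
        rw [assocQ_inl_inl]
      · have he2 : e12 = finSumFinEquiv (Sum.inr eb) := Equiv.symm_apply_eq _ |>.mp h2
        subst he2
        simp only [Equiv.trans_apply, Equiv.symm_apply_apply,
          Equiv.sumCongr_apply, Equiv.refl_apply, Sum.map_inl, Sum.map_inr,
          Equiv.sumAssoc_apply_inl_inl, Equiv.sumAssoc_apply_inl_inr, Equiv.sumAssoc_apply_inr]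
        have k1 : (ccomp (ccomp A B) C).edg
            ((finSumFinEquiv (m := A.m + B.m) (n := C.m))
              (Sum.inl (finSumFinEquiv (Sum.inr eb)))) =
            ⟨(B.edg eb).1, fun j => fuseE (ccomp A B) C (Quot.mk _ (Sum.inl
              (fuseE A B (Quot.mk _ (Sum.inr ((B.edg eb).2 j))))))⟩ :=
          (ccomp_edg_inl_s9 (ccomp A B) C (finSumFinEquiv (Sum.inr eb))).trans
            (by rw [ccomp_edg_inr_s9 A B eb])
        have k2 : (ccomp A (ccomp B C)).edg
            ((finSumFinEquiv (m := A.m) (n := B.m + C.m))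
              (Sum.inr (finSumFinEquiv (Sum.inl eb)))) =
            ⟨(B.edg eb).1, fun j => fuseE A (ccomp B C) (Quot.mk _ (Sum.inr
              (fuseE B C (Quot.mk _ (Sum.inl ((B.edg eb).2 j))))))⟩ :=
          (ccomp_edg_inr_s9 A (ccomp B C) (finSumFinEquiv (Sum.inl eb))).trans
            (by rw [ccomp_edg_inl_s9 B C eb])
        rw [k1, k2]
        refine Sigma.ext rfl (heq_of_eq (funext fun j => ?_))
        simp only [Equiv.symm_apply_apply]
        rw [assocQ_inl_inr]
    · have he : e = (finSumFinEquiv (m := A.m + B.m) (n := C.m)) (Sum.inr ec) :=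
        Equiv.symm_apply_eq _ |>.mp h
      subst he
      simp only [Equiv.trans_apply, Equiv.symm_apply_apply,
        Equiv.sumCongr_apply, Equiv.refl_apply, Sum.map_inl, Sum.map_inr,
        Equiv.sumAssoc_apply_inl_inl, Equiv.sumAssoc_apply_inl_inr, Equiv.sumAssoc_apply_inr]
      have k1 : (ccomp (ccomp A B) C).edg
          ((finSumFinEquiv (m := A.m + B.m) (n := C.m)) (Sum.inr ec)) =
          ⟨(C.edg ec).1, fun j => fuseE (ccomp A B) C
            (Quot.mk _ (Sum.inr ((C.edg ec).2 j)))⟩ :=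
        ccomp_edg_inr_s9 (ccomp A B) C ec
      have k2 : (ccomp A (ccomp B C)).edg
          ((finSumFinEquiv (m := A.m) (n := B.m + C.m))
            (Sum.inr (finSumFinEquiv (Sum.inr ec)))) =
          ⟨(C.edg ec).1, fun j => fuseE A (ccomp B C) (Quot.mk _ (Sum.inr
            (fuseE B C (Quot.mk _ (Sum.inr ((C.edg ec).2 j))))))⟩ :=
        (ccomp_edg_inr_s9 A (ccomp B C) (finSumFinEquiv (Sum.inr ec))).trans
          (by rw [ccomp_edg_inr_s9 B C ec])
      rw [k1, k2]
      refine Sigma.ext rfl (heq_of_eq (funext fun j => ?_))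
      simp only [Equiv.symm_apply_apply]
      rw [assocQ_inr]
  · intro s h₁ h₂
    by_cases ha : s ∈ A.srt
    · have hab : s ∈ (ccomp A B).srt := by
        rw [ccomp_srt]; exact Finset.mem_union_left _ ha
      rw [ccomp_src₁ (ccomp A B) C s h₁ hab, ccomp_src₁ A B s hab ha,
        ccomp_src₁ A (ccomp B C) s h₂ ha]
      simp only [Equiv.trans_apply, Equiv.symm_apply_apply]
      rw [assocQ_inl_inl]
    · by_cases hb : s ∈ B.srt
      · have hab : s ∈ (ccomp A B).srt := by
          rw [ccomp_srt]; exact Finset.mem_union_right _ hb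
        have hbc : s ∈ (ccomp B C).srt := by
          rw [ccomp_srt]; exact Finset.mem_union_left _ hb
        rw [ccomp_src₁ (ccomp A B) C s h₁ hab, ccomp_src₂ A B s hab ha hb,
          ccomp_src₂ A (ccomp B C) s h₂ ha hbc, ccomp_src₁ B C s hbc hb]
        simp only [Equiv.trans_apply, Equiv.symm_apply_apply]
        rw [assocQ_inl_inr]
      · have hc : s ∈ C.srt := by
          rcases Finset.mem_union.mp h₁ with h | h
          · rcases Finset.mem_union.mp (by rw [← ccomp_srt A B]; exact h) with h' | h'
            · exact absurd h' ha
            · exact absurd h' hb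
          · exact h
        have hab : s ∉ (ccomp A B).srt := by
          rw [ccomp_srt]
          simp [ha, hb]
        have hbc : s ∈ (ccomp B C).srt := by
          rw [ccomp_srt]; exact Finset.mem_union_right _ hc
        rw [ccomp_src₂ (ccomp A B) C s h₁ hab hc,
          ccomp_src₂ A (ccomp B C) s h₂ ha hbc, ccomp_src₂ B C s hbc hb hc]
        simp only [Equiv.trans_apply, Equiv.symm_apply_apply]
        rw [assocQ_inr]

end Assoc

/-! #### A permutation moving a finite set of labels out of the way -/

def shiftf (D : Finset ℕ) (N : ℕ) : ℕ → ℕ := fun x =>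
  if x ∈ D then x + N else if N ≤ x ∧ x - N ∈ D then x - N else x

theorem shiftf_invol (D : Finset ℕ) (N : ℕ) (hN : ∀ x ∈ D, x < N) :
    Function.Involutive (shiftf D N) := by
  intro x
  unfold shiftf
  by_cases h1 : x ∈ D
  · rw [if_pos h1]
    have h2 : x + N ∉ D := fun hc => by have := hN _ hc; omega
    rw [if_neg h2, if_pos ⟨by omega, by simpa [Nat.add_sub_cancel] using h1⟩]
    omega
  · rw [if_neg h1]
    by_cases h2 : N ≤ x ∧ x - N ∈ D
    · rw [if_pos h2, if_pos h2.2]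
      omega
    · rw [if_neg h2, if_neg h1, if_neg h2]

noncomputable def shiftPerm (D : Finset ℕ) (N : ℕ) (hN : ∀ x ∈ D, x < N) : Equiv.Perm ℕ :=
  (shiftf_invol D N hN).toPerm _

theorem shiftPerm_mem (D : Finset ℕ) (N : ℕ) (hN : ∀ x ∈ D, x < N) {x : ℕ}
    (h : x ∈ D) : shiftPerm D N hN x = x + N := by
  show shiftf D N x = _
  rw [shiftf, if_pos h]

theorem shiftPerm_small (D : Finset ℕ) (N : ℕ) (hN : ∀ x ∈ D, x < N) {x : ℕ}
    (h1 : x ∉ D) (h2 : x < N) : shiftPerm D N hN x = x := by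
  show shiftf D N x = _
  rw [shiftf, if_neg h1, if_neg (fun hc => by omega)]

/-! #### Fusion-relation identities -/

theorem fuseRel_restrict (H G : CG Lab ar) (σ : Finset ℕ) (α : Equiv.Perm ℕ)
    (hfix : ∀ s ∈ H.srt, s ∈ σ → α s = s)
    (hmove : ∀ s ∈ H.srt, s ∉ σ → α s ∉ G.srt) :
    fuseRel (crestrict σ H) G = fuseRel H (crename α G) := by
  funext x y
  apply propext
  constructor
  · rintro ⟨s, h₁, h₂, rfl, rfl⟩
    have hs : s ∈ H.srt := (Finset.mem_inter.mp h₁).1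
    have hσ : s ∈ σ := (Finset.mem_inter.mp h₁).2
    have hα : α s = s := hfix s hs hσ
    have h₂' : s ∈ (crename α G).srt := by
      rw [crename_srt]
      refine Finset.mem_image.mpr ⟨s, h₂, ?_⟩
      exact (Equiv.symm_apply_eq α).mpr hα.symm
    refine ⟨s, hs, h₂', rfl, ?_⟩
    exact congrArg Sum.inr (congrArg G.src (Subtype.ext hα.symm))
  · rintro ⟨s, h₁, h₂, rfl, rfl⟩
    have h₂'' : s ∈ G.srt.image (α.symm : ℕ → ℕ) := by rwa [crename_srt] at h₂
    obtain ⟨y0, hy0, hy0e⟩ := Finset.mem_image.mp h₂''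
    have hαs : α s = y0 := by rw [← hy0e, Equiv.apply_symm_apply]
    have hσ : s ∈ σ := by
      by_contra hns
      exact (hmove s h₁ hns) (hαs ▸ hy0)
    have hα : α s = s := hfix s h₁ hσ
    have hsG : s ∈ G.srt := by rw [hα.symm.trans hαs]; exact hy0
    refine ⟨s, Finset.mem_inter.mpr ⟨h₁, hσ⟩, hsG, rfl, ?_⟩
    exact congrArg Sum.inr (congrArg G.src (Subtype.ext hα))

theorem fuseRel_rename (H G : CG Lab ar) (β : Equiv.Perm ℕ) :
    fuseRel (crename β H) G = fuseRel H (crename β.symm G) := by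
  funext x y
  apply propext
  constructor
  · rintro ⟨s, h₁, h₂, rfl, rfl⟩
    have h₁' : s ∈ H.srt.image (β.symm : ℕ → ℕ) := by rwa [crename_srt] at h₁
    obtain ⟨y0, hy0, hy0e⟩ := Finset.mem_image.mp h₁'
    have hβs : β s ∈ H.srt := by
      rw [show β s = y0 from by rw [← hy0e, Equiv.apply_symm_apply]]
      exact hy0
    have h₂' : β s ∈ (crename β.symm G).srt := by
      rw [crename_srt]
      exact Finset.mem_image.mpr ⟨s, h₂, by simp⟩
    refine ⟨β s, hβs, h₂', rfl, ?_⟩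
    exact congrArg Sum.inr (congrArg G.src (Subtype.ext (Equiv.symm_apply_apply β s).symm))
  · rintro ⟨t, h₁, h₂, rfl, rfl⟩
    have hs1 : β.symm t ∈ (crename β H).srt := by
      rw [crename_srt]
      exact Finset.mem_image.mpr ⟨t, h₁, rfl⟩
    have h₂' : t ∈ G.srt.image ((β.symm).symm : ℕ → ℕ) := by rwa [crename_srt] at h₂
    obtain ⟨y0, hy0, hy0e⟩ := Finset.mem_image.mp h₂'
    have hs2 : β.symm t ∈ G.srt := by
      rw [show β.symm t = y0 from by rw [← hy0e]; simp]
      exact hy0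
    refine ⟨β.symm t, hs1, hs2, ?_, ?_⟩
    · exact congrArg Sum.inl (congrArg H.src (Subtype.ext (Equiv.apply_symm_apply β t).symm))
    · rfl

/-- The common shape of the `edg` field of a composition. -/
noncomputable def mkedg {n₁ m₁ n₂ m₂ : ℕ}
    (edg₁ : Fin m₁ → (a : Lab) × (Fin (ar a) → Fin n₁))
    (edg₂ : Fin m₂ → (a : Lab) × (Fin (ar a) → Fin n₂))
    (r : (Fin n₁ ⊕ Fin n₂) → (Fin n₁ ⊕ Fin n₂) → Prop) :
    Fin (m₁ + m₂) → (a : Lab) × (Fin (ar a) → Fin (Nat.card (Quot r))) :=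
  fun i =>
    Sum.elim
      (fun e₁ => ⟨(edg₁ e₁).1,
        fun j => Finite.equivFin (Quot r) (Quot.mk r (Sum.inl ((edg₁ e₁).2 j)))⟩)
      (fun e₂ => ⟨(edg₂ e₂).1,
        fun j => Finite.equivFin (Quot r) (Quot.mk r (Sum.inr ((edg₂ e₂).2 j)))⟩)
      (finSumFinEquiv.symm i)

theorem mkedg_apply {n₁ m₁ n₂ m₂ : ℕ}
    (edg₁ : Fin m₁ → (a : Lab) × (Fin (ar a) → Fin n₁))
    (edg₂ : Fin m₂ → (a : Lab) × (Fin (ar a) → Fin n₂))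
    (r : (Fin n₁ ⊕ Fin n₂) → (Fin n₁ ⊕ Fin n₂) → Prop) (i : Fin (m₁ + m₂)) :
    mkedg edg₁ edg₂ r i =
      Sum.elim
        (fun e₁ => ⟨(edg₁ e₁).1,
          fun j => Finite.equivFin (Quot r) (Quot.mk r (Sum.inl ((edg₁ e₁).2 j)))⟩)
        (fun e₂ => ⟨(edg₂ e₂).1,
          fun j => Finite.equivFin (Quot r) (Quot.mk r (Sum.inr ((edg₂ e₂).2 j)))⟩)
        (finSumFinEquiv.symm i) := rfl

/-- Composition with `∅` sort, depending only on the raw data. -/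
noncomputable def rcomp {n₁ m₁ n₂ m₂ : ℕ}
    (edg₁ : Fin m₁ → (a : Lab) × (Fin (ar a) → Fin n₁))
    (edg₂ : Fin m₂ → (a : Lab) × (Fin (ar a) → Fin n₂))
    (r : (Fin n₁ ⊕ Fin n₂) → (Fin n₁ ⊕ Fin n₂) → Prop) : CG Lab ar where
  n := Nat.card (Quot r)
  m := m₁ + m₂
  edg := mkedg edg₁ edg₂ r
  srt := ∅
  src s := absurd s.2 (Finset.notMem_empty s.1)

theorem crestrict_ccomp_eq_rcomp (A B : CG Lab ar) (τ : Finset ℕ)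
    (h : (A.srt ∪ B.srt) ∩ τ = ∅) :
    crestrict τ (ccomp A B) = rcomp A.edg B.edg (fuseRel A B) := by
  refine CG.ext_empty rfl rfl (heq_of_eq ?_) h rfl
  funext i
  show (ccomp A B).edg i = mkedg A.edg B.edg (fuseRel A B) i
  erw [ccomp_edg, mkedg_apply]
  rcases h2 : finSumFinEquiv.symm i with e1 | e2 <;> rfl

theorem restrict_comp_eq (H G : CG Lab ar) (σ τ : Finset ℕ) (α : Equiv.Perm ℕ)
    (hfix : ∀ s ∈ H.srt, s ∈ σ → α s = s)
    (hmove : ∀ s ∈ H.srt, s ∉ σ → α s ∉ G.srt)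
    (hS : ((H.srt ∩ σ) ∪ G.srt) ∩ τ = ∅) :
    crestrict τ (ccomp (crestrict σ H) G) = crestrict ∅ (ccomp H (crename α G)) := by
  have hr : fuseRel (crestrict σ H) G = fuseRel H (crename α G) :=
    fuseRel_restrict H G σ α hfix hmove
  rw [crestrict_ccomp_eq_rcomp (crestrict σ H) G τ (by rw [crestrict_srt]; exact hS),
    crestrict_ccomp_eq_rcomp H (crename α G) ∅ (Finset.inter_empty _)]
  show rcomp H.edg G.edg (fuseRel (crestrict σ H) G) =
    rcomp H.edg G.edg (fuseRel H (crename α G))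
  rw [hr]

theorem rename_comp_eq (H G : CG Lab ar) (β : Equiv.Perm ℕ) (τ : Finset ℕ)
    (hS : (H.srt.image (β.symm : ℕ → ℕ) ∪ G.srt) ∩ τ = ∅) :
    crestrict τ (ccomp (crename β H) G) = crestrict ∅ (ccomp H (crename β.symm G)) := by
  have hr : fuseRel (crename β H) G = fuseRel H (crename β.symm G) :=
    fuseRel_rename H G β
  rw [crestrict_ccomp_eq_rcomp (crename β H) G τ (by rw [crename_srt]; exact hS),
    crestrict_ccomp_eq_rcomp H (crename β.symm G) ∅ (Finset.inter_empty _)]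
  show rcomp H.edg G.edg (fuseRel (crename β H) G) =
    rcomp H.edg G.edg (fuseRel H (crename β.symm G))
  rw [hr]

/-! #### The saturation relation -/

/-- The candidate relation: same sort and the same behaviour in all contexts of
the form `restrict_τ (· ∥ G)`. -/
def SR (L : Set (CG Lab ar)) (X Y : CG Lab ar) : Prop :=
  X.srt = Y.srt ∧ ∀ (G : CG Lab ar) (τ : Finset ℕ),
    (crestrict τ (ccomp X G) ∈ L ↔ crestrict τ (ccomp Y G) ∈ L)

theorem SR.refl {L : Set (CG Lab ar)} (X : CG Lab ar) : SR L X X :=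
  ⟨rfl, fun _ _ => Iff.rfl⟩

theorem SR.restrict {L : Set (CG Lab ar)} (hsf : ∀ G ∈ L, G.srt = ∅)
    {X Y : CG Lab ar} (σ : Finset ℕ) (h : SR L X Y) :
    SR L (crestrict σ X) (crestrict σ Y) := by
  refine ⟨by rw [crestrict_srt, crestrict_srt, h.1], fun G τ => ?_⟩
  by_cases hS : ((X.srt ∩ σ) ∪ G.srt) ∩ τ = ∅
  · have hN : ∀ x ∈ X.srt ∪ G.srt, x < (X.srt ∪ G.srt).sup id + 1 :=
      fun x hx => Nat.lt_succ_of_le (Finset.le_sup (f := id) hx)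
    set N := (X.srt ∪ G.srt).sup id + 1 with hNdef
    have hD : ∀ x ∈ X.srt \ σ, x < N :=
      fun x hx => hN x (Finset.mem_union_left _ (Finset.mem_sdiff.mp hx).1)
    set α := shiftPerm (X.srt \ σ) N hD with hα
    have hfixX : ∀ s ∈ X.srt, s ∈ σ → α s = s := by
      intro s hs hσ
      exact shiftPerm_small _ _ hD (fun hc => (Finset.mem_sdiff.mp hc).2 hσ)
        (hN s (Finset.mem_union_left _ hs))
    have hmoveX : ∀ s ∈ X.srt, s ∉ σ → α s ∉ G.srt := by
      intro s hs hσ hc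
      rw [shiftPerm_mem _ _ hD (Finset.mem_sdiff.mpr ⟨hs, hσ⟩)] at hc
      have := hN _ (Finset.mem_union_right _ hc)
      omega
    have hfixY : ∀ s ∈ Y.srt, s ∈ σ → α s = s :=
      fun s hs hσ => hfixX s (by rw [h.1]; exact hs) hσ
    have hmoveY : ∀ s ∈ Y.srt, s ∉ σ → α s ∉ G.srt :=
      fun s hs hσ => hmoveX s (by rw [h.1]; exact hs) hσ
    rw [restrict_comp_eq X G σ τ α hfixX hmoveX hS,
      restrict_comp_eq Y G σ τ α hfixY hmoveY (by rw [← h.1]; exact hS)]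
    exact h.2 (crename α G) ∅
  · have hx : ∀ Z : CG Lab ar, Z.srt = X.srt →
        crestrict τ (ccomp (crestrict σ Z) G) ∉ L := by
      intro Z hZ hmem
      apply hS
      have := hsf _ hmem
      rwa [crestrict_srt, ccomp_srt, crestrict_srt, hZ] at this
    exact iff_of_false (hx X rfl) (hx Y h.1.symm)

theorem SR.rename {L : Set (CG Lab ar)} (hsf : ∀ G ∈ L, G.srt = ∅)
    {X Y : CG Lab ar} (β : Equiv.Perm ℕ) (h : SR L X Y) :
    SR L (crename β X) (crename β Y) := by
  refine ⟨by rw [crename_srt, crename_srt, h.1], fun G τ => ?_⟩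
  by_cases hS : (X.srt.image (β.symm : ℕ → ℕ) ∪ G.srt) ∩ τ = ∅
  · rw [rename_comp_eq X G β τ hS, rename_comp_eq Y G β τ (by rw [← h.1]; exact hS)]
    exact h.2 (crename β.symm G) ∅
  · have hx : ∀ Z : CG Lab ar, Z.srt = X.srt →
        crestrict τ (ccomp (crename β Z) G) ∉ L := by
      intro Z hZ hmem
      apply hS
      have := hsf _ hmem
      rwa [crestrict_srt, ccomp_srt, crename_srt, hZ] at this
    exact iff_of_false (hx X rfl) (hx Y h.1.symm)

theorem SR.comp {L : Set (CG Lab ar)} (hiso : IsoClosed L)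
    {X₁ Y₁ X₂ Y₂ : CG Lab ar} (h1 : SR L X₁ Y₁) (h2 : SR L X₂ Y₂) :
    SR L (ccomp X₁ X₂) (ccomp Y₁ Y₂) := by
  refine ⟨by rw [ccomp_srt, ccomp_srt, h1.1, h2.1], fun G τ => ?_⟩
  have step1 : crestrict τ (ccomp (ccomp X₁ X₂) G) ∈ L ↔
      crestrict τ (ccomp X₁ (ccomp X₂ G)) ∈ L :=
    GIso.mem_iff hiso (GIso.crestrict τ (ccomp_assoc X₁ X₂ G))
  have step2 := h1.2 (ccomp X₂ G) τ
  have step3 : crestrict τ (ccomp Y₁ (ccomp X₂ G)) ∈ L ↔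
      crestrict τ (ccomp X₂ (ccomp G Y₁)) ∈ L :=
    GIso.mem_iff hiso (GIso.crestrict τ (((ccomp_assoc Y₁ X₂ G).symm).trans
      ((ccomp_assoc Y₁ X₂ G).trans ((ccomp_comm Y₁ (ccomp X₂ G)).trans
        (ccomp_assoc X₂ G Y₁)))))
  have step4 := h2.2 (ccomp G Y₁) τ
  have step5 : crestrict τ (ccomp Y₂ (ccomp G Y₁)) ∈ L ↔
      crestrict τ (ccomp (ccomp Y₁ Y₂) G) ∈ L :=
    GIso.mem_iff hiso (GIso.crestrict τ (((ccomp_assoc Y₁ Y₂ G).trans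
      ((ccomp_comm Y₁ (ccomp Y₂ G)).trans (ccomp_assoc Y₂ G Y₁))).symm))
  exact step1.trans (step2.trans (step3.trans (step4.trans step5)))

theorem SR.mem {L : Set (CG Lab ar)} (hsf : ∀ G ∈ L, G.srt = ∅)
    (hiso : IsoClosed L) {X Y : CG Lab ar} (h : SR L X Y) : X ∈ L ↔ Y ∈ L := by
  by_cases hX : X.srt = ∅
  · have hY : Y.srt = ∅ := by rw [← h.1]; exact hX
    have eX : crestrict ∅ (ccomp X (czero ∅)) = ccomp X (czero ∅) :=
      CG.ext_empty rfl rfl HEq.rfl (Finset.inter_empty _)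
        (by rw [ccomp_srt, hX]; simp [czero])
    have eY : crestrict ∅ (ccomp Y (czero ∅)) = ccomp Y (czero ∅) :=
      CG.ext_empty rfl rfl HEq.rfl (Finset.inter_empty _)
        (by rw [ccomp_srt, hY]; simp [czero])
    have gX : X ∈ L ↔ crestrict ∅ (ccomp X (czero ∅)) ∈ L := by
      rw [eX]
      exact (GIso.mem_iff hiso (ccomp_czero X)).symm
    have gY : Y ∈ L ↔ crestrict ∅ (ccomp Y (czero ∅)) ∈ L := by
      rw [eY]
      exact (GIso.mem_iff hiso (ccomp_czero Y)).symm
    exact gX.trans ((h.2 (czero ∅) ∅).trans gY.symm)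
  · exact iff_of_false (fun hm => hX (hsf _ hm))
      (fun hm => hX (h.1.trans (hsf _ hm)))

end Aux

/-- For a set `L` of graphs with no sources, `G₁` and `G₂` are
equivalent under the syntactic congruence of `L` in the HR graph algebra iff they
have the same sort and for every graph `G` and finite sort `τ`,
`restrict_τ(G₁ ∥ G) ∈ L ⟺ restrict_τ(G₂ ∥ G) ∈ L`. -/
theorem syntactic_congruence_characterization_sourceless {Lab : Type} {ar : Lab → ℕ}
    (L : Set (CG Lab ar)) (hsf : ∀ G ∈ L, G.srt = ∅) (hiso : IsoClosed L)
    (G₁ G₂ : CG Lab ar) :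
    SynCongHR L G₁ G₂ ↔
      (G₁.srt = G₂.srt ∧ ∀ (G : CG Lab ar) (τ : Finset ℕ),
        (crestrict τ (ccomp G₁ G) ∈ L ↔ crestrict τ (ccomp G₂ G) ∈ L)) := by
  constructor
  · rintro ⟨hsrt, hctx⟩
    exact ⟨hsrt, fun G τ =>
      hctx (HRCtx.restrict τ (HRCtx.comp HRCtx.hole (HRCtx.const G)))⟩
  · rintro ⟨hsrt, hG⟩
    have key : ∀ c : HRCtx Lab ar, SR L (c.apply G₁) (c.apply G₂) := by
      intro c
      induction c with
      | hole => exact ⟨hsrt, hG⟩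
      | const H => exact SR.refl _
      | zero τ => exact SR.refl _
      | edge a s => exact SR.refl _
      | restrict τ c ih => exact SR.restrict hsf τ ih
      | rename α hα c ih => exact SR.rename hsf α ih
      | comp c₁ c₂ ih₁ ih₂ => exact SR.comp hiso ih₁ ih₂
    exact ⟨hsrt, fun c => SR.mem hsf hiso (key c)⟩

end

end GraphCF
end
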